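/- arXiv:2109.14594 — 6 statements merged into one kernel-verified Lean document; each statement's English description precedes it below -/
import Mathlib

section
/- Let C be a model category, A a cofibrant object, X a fibrant object, and PX a path object for X, i.e. a factorization X →(w) PX →(p) X × X of the diagonal morphism where w is a weak equivalence and p is a fibration. Then the canonical map Hom_C(A, X) → Hom_{Ho(C)}(A, X) into the localization of C at the weak equivalences is surjective, and two morphisms f, g : A → X have the same image in Ho(C) if and only if there exists h : A → PX with p ∘ h = (f, g). Equivalently, Hom_{Ho(C)}(A, X) is the coequalizer of the two maps Hom_C(A, PX) ⇉ Hom_C(A, X) induced by the two projections PX → X × X → X. -/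
/-!
STATEMENT 1: description of morphisms in the homotopy category of a model category
from a cofibrant object to a fibrant object, via path objects (Quillen).
-/

open CategoryTheory CategoryTheory.Limits

universe v u

/-- A morphism property is closed under retracts. -/
def CategoryTheory.MorphismProperty.IsRetractClosed {C : Type u} [Category.{v} C]
    (P : MorphismProperty C) : Prop :=
  ∀ ⦃X Y X' Y' : C⦄ (f : X ⟶ Y) (g : X' ⟶ Y') (i : X ⟶ X') (r : X' ⟶ X)
    (i' : Y ⟶ Y') (r' : Y' ⟶ Y),
      i ≫ r = 𝟙 X → i' ≫ r' = 𝟙 Y → i ≫ g = f ≫ i' → g ≫ r' = r ≫ f → P g → P f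

/-- A model structure on a category `C`, following Quillen's axioms (as in Mathlib's
`ModelCategory` class). -/
structure ModelStructure (C : Type u) [Category.{v} C] where
  weq : MorphismProperty C
  fib : MorphismProperty C
  cof : MorphismProperty C
  cm1a : HasFiniteLimits C
  cm1b : HasFiniteColimits C
  cm2 : weq.HasTwoOutOfThreeProperty
  cm3a : weq.IsRetractClosed
  cm3b : fib.IsRetractClosed
  cm3c : cof.IsRetractClosed
  cm4a : ∀ ⦃A B X Y : C⦄ (i : A ⟶ B) (p : X ⟶ Y),
      cof i → weq i → fib p → HasLiftingProperty i p
  cm4b : ∀ ⦃A B X Y : C⦄ (i : A ⟶ B) (p : X ⟶ Y),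
      cof i → fib p → weq p → HasLiftingProperty i p
  cm5a : MorphismProperty.HasFactorization
      (fun _ _ f => weq f ∧ cof f : MorphismProperty C) fib
  cm5b : MorphismProperty.HasFactorization
      cof (fun _ _ f => weq f ∧ fib f : MorphismProperty C)

attribute [local simp] prod.lift_fst prod.lift_snd coprod.inl_desc coprod.inr_desc
  prod.lift_fst_assoc prod.lift_snd_assoc coprod.inl_desc_assoc coprod.inr_desc_assoc
  pullback.lift_fst pullback.lift_snd pullback.lift_fst_assoc pullback.lift_snd_assoc

namespace ModelStructure

open CategoryTheory CategoryTheory.Limits MorphismProperty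

variable {C : Type u} [Category.{v} C] (M : ModelStructure C)

lemma weq_id (X : C) : M.weq (𝟙 X) := by
  haveI := M.cm2
  obtain ⟨d⟩ := M.cm5a.nonempty_mapFactorizationData (𝟙 X)
  exact M.weq.of_postcomp (𝟙 X) d.i d.hi.1 (by rw [Category.id_comp]; exact d.hi.1)

lemma cof_of_llp {X Y : C} (f : X ⟶ Y)
    (h : ∀ ⦃U V : C⦄ (p : U ⟶ V), M.weq p → M.fib p → HasLiftingProperty f p) :
    M.cof f := by
  obtain ⟨d⟩ := M.cm5b.nonempty_mapFactorizationData f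
  haveI := h d.p d.hp.1 d.hp.2
  have sq : CommSq d.i f d.p (𝟙 Y) := ⟨by rw [Category.comp_id, d.fac]⟩
  exact M.cm3c f d.i (𝟙 X) (𝟙 X) sq.lift d.p (by simp) sq.fac_right
    (by rw [Category.id_comp, sq.fac_left]) (by rw [Category.id_comp, d.fac]) d.hi

lemma trivcof_of_llp {X Y : C} (f : X ⟶ Y)
    (h : ∀ ⦃U V : C⦄ (p : U ⟶ V), M.fib p → HasLiftingProperty f p) :
    M.weq f ∧ M.cof f := by
  obtain ⟨d⟩ := M.cm5a.nonempty_mapFactorizationData f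
  haveI := h d.p d.hp
  have sq : CommSq d.i f d.p (𝟙 Y) := ⟨by rw [Category.comp_id, d.fac]⟩
  constructor
  · exact M.cm3a f d.i (𝟙 X) (𝟙 X) sq.lift d.p (by simp) sq.fac_right
      (by rw [Category.id_comp, sq.fac_left]) (by rw [Category.id_comp, d.fac]) d.hi.1
  · exact M.cm3c f d.i (𝟙 X) (𝟙 X) sq.lift d.p (by simp) sq.fac_right
      (by rw [Category.id_comp, sq.fac_left]) (by rw [Category.id_comp, d.fac]) d.hi.2

lemma fib_of_rlp {X Y : C} (f : X ⟶ Y)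
    (h : ∀ ⦃U V : C⦄ (i : U ⟶ V), M.weq i → M.cof i → HasLiftingProperty i f) :
    M.fib f := by
  obtain ⟨d⟩ := M.cm5a.nonempty_mapFactorizationData f
  haveI := h d.i d.hi.1 d.hi.2
  have sq : CommSq (𝟙 X) d.i f d.p := ⟨by rw [Category.id_comp, d.fac]⟩
  exact M.cm3b f d.p d.i sq.lift (𝟙 Y) (𝟙 Y) sq.fac_left (by simp)
    (by rw [Category.comp_id, d.fac]) (by rw [Category.comp_id, sq.fac_right]) d.hp

lemma trivfib_of_rlp {X Y : C} (f : X ⟶ Y)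
    (h : ∀ ⦃U V : C⦄ (i : U ⟶ V), M.cof i → HasLiftingProperty i f) :
    M.weq f ∧ M.fib f := by
  obtain ⟨d⟩ := M.cm5b.nonempty_mapFactorizationData f
  haveI := h d.i d.hi
  have sq : CommSq (𝟙 X) d.i f d.p := ⟨by rw [Category.id_comp, d.fac]⟩
  constructor
  · exact M.cm3a f d.p d.i sq.lift (𝟙 Y) (𝟙 Y) sq.fac_left (by simp)
      (by rw [Category.comp_id, d.fac]) (by rw [Category.comp_id, sq.fac_right]) d.hp.1
  · exact M.cm3b f d.p d.i sq.lift (𝟙 Y) (𝟙 Y) sq.fac_left (by simp)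
      (by rw [Category.comp_id, d.fac]) (by rw [Category.comp_id, sq.fac_right]) d.hp.2

lemma cof_comp {X Y Z : C} {f : X ⟶ Y} {g : Y ⟶ Z} (hf : M.cof f) (hg : M.cof g) :
    M.cof (f ≫ g) :=
  M.cof_of_llp _ (fun _ _ p hw hp => by
    haveI := M.cm4b f p hf hp hw
    haveI := M.cm4b g p hg hp hw
    infer_instance)

lemma fib_comp {X Y Z : C} {f : X ⟶ Y} {g : Y ⟶ Z} (hf : M.fib f) (hg : M.fib g) :
    M.fib (f ≫ g) :=
  M.fib_of_rlp _ (fun _ _ i hw hc => by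
    haveI := M.cm4a i f hc hw hf
    haveI := M.cm4a i g hc hw hg
    infer_instance)

lemma cof_inl {A : C} [HasInitial C] [HasBinaryCoproduct A A]
    (hA : M.cof (initial.to A)) : M.cof (coprod.inl : A ⟶ A ⨿ A) :=
  M.cof_of_llp _ (fun U V p hw hp => by
    haveI := M.cm4b (initial.to A) p hA hp hw
    exact ⟨fun {t b} sq => by
      have sq2 : CommSq (initial.to U) (initial.to A) p (coprod.inr ≫ b) :=
        ⟨by apply Limits.initial.hom_ext⟩
      exact ⟨⟨⟨coprod.desc t sq2.lift, by simp, by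
        apply coprod.hom_ext
        · simpa using sq.w
        · simpa using sq2.fac_right⟩⟩⟩⟩)

lemma fib_fst {Y Z : C} [HasTerminal C] [HasBinaryProduct Y Z]
    (hZ : M.fib (terminal.from Z)) : M.fib (prod.fst : Y ⨯ Z ⟶ Y) :=
  M.fib_of_rlp _ (fun U V i hw hc => by
    haveI := M.cm4a i (terminal.from Z) hc hw hZ
    exact ⟨fun {t b} sq => by
      have sq2 : CommSq (t ≫ prod.snd) i (terminal.from Z) (terminal.from V) :=
        ⟨by apply Limits.terminal.hom_ext⟩
      exact ⟨⟨⟨prod.lift b sq2.lift, by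
        apply Limits.prod.hom_ext
        · simpa using sq.w.symm
        · simpa using sq2.fac_left.symm, by simp⟩⟩⟩⟩)

lemma fib_snd {Y Z : C} [HasTerminal C] [HasBinaryProduct Y Z]
    (hY : M.fib (terminal.from Y)) : M.fib (prod.snd : Y ⨯ Z ⟶ Z) :=
  M.fib_of_rlp _ (fun U V i hw hc => by
    haveI := M.cm4a i (terminal.from Y) hc hw hY
    exact ⟨fun {t b} sq => by
      have sq2 : CommSq (t ≫ prod.fst) i (terminal.from Y) (terminal.from V) :=
        ⟨by apply Limits.terminal.hom_ext⟩
      exact ⟨⟨⟨prod.lift sq2.lift b, by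
        apply Limits.prod.hom_ext
        · simpa using sq2.fac_left.symm
        · simpa using sq.w.symm, by simp⟩⟩⟩⟩)

lemma trivfib_pullback_snd {X Y Z : C} (f : X ⟶ Z) (g : Y ⟶ Z) [HasPullback f g]
    (hf : M.weq f ∧ M.fib f) : M.weq (pullback.snd f g) ∧ M.fib (pullback.snd f g) :=
  M.trivfib_of_rlp _ (fun U V i hc => by
    haveI := M.cm4b i f hc hf.2 hf.1
    exact ⟨fun {t b} sq => by
      have sq2 : CommSq (t ≫ pullback.fst f g) i f (b ≫ g) :=
        ⟨by rw [Category.assoc, pullback.condition, ← Category.assoc, sq.w, Category.assoc]⟩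
      exact ⟨⟨⟨pullback.lift sq2.lift b (by simpa using sq2.fac_right), by
        apply pullback.hom_ext
        · simpa using sq2.fac_left
        · simpa using sq.w.symm
        , by simp⟩⟩⟩⟩)

end ModelStructure
namespace ModelStructure

open CategoryTheory CategoryTheory.Limits MorphismProperty

variable {C : Type u} [Category.{v} C] (M : ModelStructure C)

/-- Left homotopy via an arbitrary (lax) cylinder object. -/
def LH {B Z : C} [HasBinaryCoproduct B B] (f g : B ⟶ Z) : Prop :=
  ∃ (Cyl : C) (c : B ⨿ B ⟶ Cyl) (σ : Cyl ⟶ B) (H : Cyl ⟶ Z),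
    M.weq σ ∧ c ≫ σ = coprod.desc (𝟙 B) (𝟙 B) ∧
    coprod.inl ≫ c ≫ H = f ∧ coprod.inr ≫ c ≫ H = g

/-- Right homotopy via an arbitrary (lax) path object. -/
def RH {B Z : C} (f g : B ⟶ Z) : Prop :=
  ∃ (P : C) (w : Z ⟶ P) (q₀ q₁ : P ⟶ Z) (h : B ⟶ P),
    M.weq w ∧ w ≫ q₀ = 𝟙 Z ∧ w ≫ q₁ = 𝟙 Z ∧ h ≫ q₀ = f ∧ h ≫ q₁ = g

variable {M}

lemma LH.refl {B Z : C} [HasBinaryCoproduct B B] (f : B ⟶ Z) : M.LH f f :=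
  ⟨B, coprod.desc (𝟙 B) (𝟙 B), 𝟙 B, f, M.weq_id B, by simp, by simp, by simp⟩

lemma LH.symm {B Z : C} [HasBinaryCoproduct B B] {f g : B ⟶ Z} (h : M.LH f g) :
    M.LH g f := by
  obtain ⟨Cyl, c, σ, H, hσ, hcσ, h₀, h₁⟩ := h
  refine ⟨Cyl, coprod.desc coprod.inr coprod.inl ≫ c, σ, H, hσ, ?_, ?_, ?_⟩
  · rw [Category.assoc, hcσ]
    apply coprod.hom_ext <;> simp
  · simpa using h₁
  · simpa using h₀

lemma LH.postcomp {B Z Z' : C} [HasBinaryCoproduct B B] {f g : B ⟶ Z} (h : M.LH f g)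
    (u : Z ⟶ Z') : M.LH (f ≫ u) (g ≫ u) := by
  obtain ⟨Cyl, c, σ, H, hσ, hcσ, h₀, h₁⟩ := h
  refine ⟨Cyl, c, σ, H ≫ u, hσ, hcσ, ?_, ?_⟩
  · simp only [← Category.assoc] at h₀ ⊢; rw [h₀]
  · simp only [← Category.assoc] at h₁ ⊢; rw [h₁]

lemma RH.precomp {B B' Z : C} {f g : B ⟶ Z} (h : M.RH f g) (k : B' ⟶ B) :
    M.RH (k ≫ f) (k ≫ g) := by
  obtain ⟨P, w, q₀, q₁, ht, hw, e₀, e₁, hf, hg⟩ := h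
  exact ⟨P, w, q₀, q₁, k ≫ ht, hw, e₀, e₁, by rw [Category.assoc, hf], by
    rw [Category.assoc, hg]⟩

lemma LH.map_eq {B Z : C} [HasBinaryCoproduct B B] {f g : B ⟶ Z} (h : M.LH f g) :
    M.weq.Q.map f = M.weq.Q.map g := by
  obtain ⟨Cyl, c, σ, H, hσ, hcσ, h₀, h₁⟩ := h
  haveI : IsIso (M.weq.Q.map σ) := M.weq.Q_inverts σ hσ
  have e₀ : (coprod.inl ≫ c) ≫ σ = 𝟙 B := by rw [Category.assoc, hcσ]; simp
  have e₁ : (coprod.inr ≫ c) ≫ σ = 𝟙 B := by rw [Category.assoc, hcσ]; simp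
  have q₀ : M.weq.Q.map (coprod.inl ≫ c) = CategoryTheory.inv (M.weq.Q.map σ) := by
    apply IsIso.eq_inv_of_inv_hom_id
    rw [← M.weq.Q.map_comp, e₀, M.weq.Q.map_id]
  have q₁ : M.weq.Q.map (coprod.inr ≫ c) = CategoryTheory.inv (M.weq.Q.map σ) := by
    apply IsIso.eq_inv_of_inv_hom_id
    rw [← M.weq.Q.map_comp, e₁, M.weq.Q.map_id]
  calc M.weq.Q.map f = M.weq.Q.map ((coprod.inl ≫ c) ≫ H) := by
        rw [Category.assoc, h₀]
    _ = M.weq.Q.map ((coprod.inr ≫ c) ≫ H) := by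
        rw [M.weq.Q.map_comp (coprod.inl ≫ c) H, M.weq.Q.map_comp (coprod.inr ≫ c) H, q₀, q₁]
    _ = M.weq.Q.map g := by rw [Category.assoc, h₁]

/-- Any left homotopy can be realized with a good cylinder (`c` a cofibration). -/
lemma LH.good {B Z : C} [HasBinaryCoproduct B B] {f g : B ⟶ Z} (h : M.LH f g) :
    ∃ (Cyl : C) (c : B ⨿ B ⟶ Cyl) (σ : Cyl ⟶ B) (H : Cyl ⟶ Z),
      M.cof c ∧ M.weq σ ∧ c ≫ σ = coprod.desc (𝟙 B) (𝟙 B) ∧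
      coprod.inl ≫ c ≫ H = f ∧ coprod.inr ≫ c ≫ H = g := by
  obtain ⟨Cyl, c, σ, H, hσ, hcσ, h₀, h₁⟩ := h
  haveI := M.cm2
  obtain ⟨d⟩ := M.cm5b.nonempty_mapFactorizationData c
  refine ⟨d.Z, d.i, d.p ≫ σ, d.p ≫ H, d.hi, M.weq.comp_mem _ _ d.hp.1 hσ, ?_, ?_, ?_⟩
  · rw [← Category.assoc, d.fac, hcσ]
  · simp only [← Category.assoc] at h₀ ⊢
    rw [Category.assoc coprod.inl d.i d.p, d.fac]
    exact h₀
  · simp only [← Category.assoc] at h₁ ⊢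
    rw [Category.assoc coprod.inr d.i d.p, d.fac]
    exact h₁

/-- Right homotopy implies left homotopy when the target is fibrant. -/
lemma RH.toLH {B Z : C} [HasTerminal C] [HasFiniteLimits C] [HasBinaryCoproduct B B]
    {f g : B ⟶ Z} (hZ : M.fib (terminal.from Z)) (h : M.RH f g) : M.LH f g := by
  haveI := M.cm2
  obtain ⟨P, w, q₀, q₁, k, hw, e₀, e₁, hf, hg⟩ := h
  -- goodification of the path object
  obtain ⟨d⟩ := M.cm5a.nonempty_mapFactorizationData (prod.lift q₀ q₁)
  set w' : Z ⟶ d.Z := w ≫ d.i with hw'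
  have hw'w : M.weq w' := M.weq.comp_mem _ _ hw d.hi.1
  set π₀ : d.Z ⟶ Z := d.p ≫ prod.fst with hπ₀
  set π₁ : d.Z ⟶ Z := d.p ≫ prod.snd with hπ₁
  have ew₀ : w' ≫ π₀ = 𝟙 Z := by
    rw [hw', hπ₀, Category.assoc, ← Category.assoc d.i, d.fac]; simpa using e₀
  have ew₁ : w' ≫ π₁ = 𝟙 Z := by
    rw [hw', hπ₁, Category.assoc, ← Category.assoc d.i, d.fac]; simpa using e₁
  set k' : B ⟶ d.Z := k ≫ d.i with hk'
  have ek₀ : k' ≫ π₀ = f := by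
    rw [hk', hπ₀, Category.assoc, ← Category.assoc d.i, d.fac]; simpa using hf
  have ek₁ : k' ≫ π₁ = g := by
    rw [hk', hπ₁, Category.assoc, ← Category.assoc d.i, d.fac]; simpa using hg
  -- π₀ is a trivial fibration
  have hπ₀f : M.fib π₀ := M.fib_comp d.hp (M.fib_fst hZ)
  have hπ₀w : M.weq π₀ := M.weq.of_precomp w' π₀ hw'w (by rw [ew₀]; exact M.weq_id Z)
  -- good cylinder for B
  obtain ⟨dc⟩ := M.cm5b.nonempty_mapFactorizationData (coprod.desc (𝟙 B) (𝟙 B))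
  haveI := M.cm4b dc.i π₀ dc.hi hπ₀f hπ₀w
  have sq : CommSq (coprod.desc (f ≫ w') k') dc.i π₀ (dc.p ≫ f) := by
    constructor
    apply coprod.hom_ext
    · simp only [← Category.assoc]
      rw [coprod.inl_desc, Category.assoc f w' π₀, ew₀, Category.comp_id,
        Category.assoc coprod.inl dc.i dc.p, dc.fac, coprod.inl_desc, Category.id_comp]
    · simp only [← Category.assoc]
      rw [coprod.inr_desc, ek₀, Category.assoc coprod.inr dc.i dc.p, dc.fac,
        coprod.inr_desc, Category.id_comp]
  refine ⟨dc.Z, dc.i, dc.p, sq.lift ≫ π₁, dc.hp.1, dc.fac, ?_, ?_⟩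
  · simp only [← Category.assoc]
    rw [Category.assoc coprod.inl dc.i sq.lift, sq.fac_left, coprod.inl_desc,
      Category.assoc f w' π₁, ew₁, Category.comp_id]
  · simp only [← Category.assoc]
    rw [Category.assoc coprod.inr dc.i sq.lift, sq.fac_left, coprod.inr_desc, ek₁]

end ModelStructure
namespace ModelStructure

open CategoryTheory CategoryTheory.Limits MorphismProperty

variable {C : Type u} [Category.{v} C] {M : ModelStructure C}

/-- Left homotopy yields a right homotopy through any prescribed path object,
when the source is cofibrant. -/
lemma LH.toRH_given {B Z P : C} [HasInitial C] [HasBinaryCoproduct B B] [HasBinaryProduct Z Z]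
    (hB : M.cof (initial.to B)) (w : Z ⟶ P) (p₀ p₁ : P ⟶ Z)
    (hw : M.weq w) (hp : M.fib (prod.lift p₀ p₁))
    (hfac : w ≫ prod.lift p₀ p₁ = prod.lift (𝟙 Z) (𝟙 Z))
    {f g : B ⟶ Z} (h : M.LH f g) :
    ∃ k : B ⟶ P, k ≫ prod.lift p₀ p₁ = prod.lift f g := by
  haveI := M.cm2
  obtain ⟨Cyl, c, σ, H, hc, hσ, hcσ, h₀, h₁⟩ := h.good
  have hi₀c : M.cof (coprod.inl ≫ c) := M.cof_comp (M.cof_inl hB) hc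
  have e₀ : (coprod.inl ≫ c) ≫ σ = 𝟙 B := by rw [Category.assoc, hcσ]; simp
  have e₁ : (coprod.inr ≫ c) ≫ σ = 𝟙 B := by rw [Category.assoc, hcσ]; simp
  have hi₀w : M.weq (coprod.inl ≫ c) :=
    M.weq.of_postcomp _ σ hσ (by rw [e₀]; exact M.weq_id B)
  haveI := M.cm4a (coprod.inl ≫ c) (prod.lift p₀ p₁) hi₀c hi₀w hp
  have sq : CommSq (f ≫ w) (coprod.inl ≫ c) (prod.lift p₀ p₁) (prod.lift (σ ≫ f) H) := by
    constructor
    rw [Category.assoc, hfac]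
    apply Limits.prod.hom_ext
    · simp only [Category.assoc, prod.comp_lift, Limits.prod.lift_fst]
      rw [Category.comp_id, ← Category.assoc coprod.inl c (σ ≫ f),
        ← Category.assoc (coprod.inl ≫ c) σ f, e₀, Category.id_comp]
    · simp only [Category.assoc, prod.comp_lift, Limits.prod.lift_snd]
      rw [Category.comp_id, h₀]
  refine ⟨(coprod.inr ≫ c) ≫ sq.lift, ?_⟩
  rw [Category.assoc, sq.fac_right]
  apply Limits.prod.hom_ext
  · simp only [prod.comp_lift, Limits.prod.lift_fst]
    rw [← Category.assoc, e₁, Category.id_comp]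
  · simp only [prod.comp_lift, Limits.prod.lift_snd]
    rw [Category.assoc, h₁]

/-- Two morphisms out of the target of a trivial cofibration that agree after
precomposition are right homotopic. -/
lemma RH_of_lift_unique [HasFiniteLimits C] {U V E : C} (j : U ⟶ V)
    (hjw : M.weq j) (hjc : M.cof j) (u u' : V ⟶ E) (h : j ≫ u = j ≫ u') : M.RH u u' := by
  obtain ⟨d⟩ := M.cm5a.nonempty_mapFactorizationData (prod.lift (𝟙 E) (𝟙 E))
  haveI := M.cm4a j d.p hjc hjw d.hp
  have sq : CommSq ((j ≫ u) ≫ d.i) j d.p (prod.lift u u') := by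
    constructor
    rw [Category.assoc, Category.assoc, d.fac]
    apply Limits.prod.hom_ext
    · simp
    · simp [h]
  refine ⟨d.Z, d.i, d.p ≫ prod.fst, d.p ≫ prod.snd, sq.lift, d.hi.1, ?_, ?_, ?_, ?_⟩
  · rw [← Category.assoc, d.fac]; simp
  · rw [← Category.assoc, d.fac]; simp
  · rw [← Category.assoc, sq.fac_right]; simp
  · rw [← Category.assoc, sq.fac_right]; simp

/-- Surjectivity: any map from a cofibrant object lifts along a trivial fibration. -/
lemma surj_through_trivfib [HasInitial C] {B E₁ E₂ : C} (q : E₁ ⟶ E₂)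
    (hqw : M.weq q) (hqf : M.fib q) (hB : M.cof (initial.to B)) (f : B ⟶ E₂) :
    ∃ k : B ⟶ E₁, k ≫ q = f := by
  haveI := M.cm4b (initial.to B) q hB hqf hqw
  have sq : CommSq (initial.to E₁) (initial.to B) q f := ⟨by apply Limits.initial.hom_ext⟩
  exact ⟨sq.lift, sq.fac_right⟩

/-- Injectivity on homotopy classes for a trivial fibration. -/
lemma LH_of_postcomp_trivfib {B E₁ E₂ : C} [HasBinaryCoproduct B B] (q : E₁ ⟶ E₂)
    (hqw : M.weq q) (hqf : M.fib q) {k k' : B ⟶ E₁}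
    (h : M.LH (k ≫ q) (k' ≫ q)) : M.LH k k' := by
  obtain ⟨Cyl, c, σ, H, hc, hσ, hcσ, h₀, h₁⟩ := h.good
  haveI := M.cm4b c q hc hqf hqw
  have sq : CommSq (coprod.desc k k') c q H := by
    constructor
    apply coprod.hom_ext
    · simp only [← Category.assoc] at h₀ ⊢
      rw [coprod.inl_desc, h₀]
    · simp only [← Category.assoc] at h₁ ⊢
      rw [coprod.inr_desc, h₁]
  refine ⟨Cyl, c, σ, sq.lift, hσ, hcσ, ?_, ?_⟩
  · rw [sq.fac_left, coprod.inl_desc]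
  · rw [sq.fac_left, coprod.inr_desc]

/-- Transitivity of left homotopy (cofibrant source, fibrant target). -/
lemma LH.trans [HasInitial C] [HasTerminal C] [HasFiniteLimits C] {B Z : C}
    [HasBinaryCoproduct B B] (hB : M.cof (initial.to B)) (hZ : M.fib (terminal.from Z))
    {f g k : B ⟶ Z} (h₁ : M.LH f g) (h₂ : M.LH g k) : M.LH f k := by
  haveI := M.cm2
  -- a good path object for Z
  obtain ⟨d⟩ := M.cm5a.nonempty_mapFactorizationData (prod.lift (𝟙 Z) (𝟙 Z))
  set q₀ : d.Z ⟶ Z := d.p ≫ prod.fst with hq₀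
  set q₁ : d.Z ⟶ Z := d.p ≫ prod.snd with hq₁
  have e₀ : d.i ≫ q₀ = 𝟙 Z := by rw [hq₀, ← Category.assoc, d.fac]; simp
  have e₁ : d.i ≫ q₁ = 𝟙 Z := by rw [hq₁, ← Category.assoc, d.fac]; simp
  have hq₁f : M.fib q₁ := M.fib_comp d.hp (M.fib_snd hZ)
  have hq₁w : M.weq q₁ := M.weq.of_precomp d.i q₁ d.hi.1 (by rw [e₁]; exact M.weq_id Z)
  have hpl : prod.lift q₀ q₁ = d.p := by
    apply Limits.prod.hom_ext <;> simp [hq₀, hq₁]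
  obtain ⟨m₁, hm₁⟩ := LH.toRH_given hB d.i q₀ q₁ d.hi.1 (by rw [hpl]; exact d.hp)
    (by rw [hpl]; exact d.fac) h₁
  obtain ⟨m₂, hm₂⟩ := LH.toRH_given hB d.i q₀ q₁ d.hi.1 (by rw [hpl]; exact d.hp)
    (by rw [hpl]; exact d.fac) h₂
  have hm₁₀ : m₁ ≫ q₀ = f := by
    have := congrArg (· ≫ (prod.fst : Z ⨯ Z ⟶ Z)) hm₁
    simpa [hq₀] using this
  have hm₁₁ : m₁ ≫ q₁ = g := by
    have := congrArg (· ≫ (prod.snd : Z ⨯ Z ⟶ Z)) hm₁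
    simpa [hq₁] using this
  have hm₂₀ : m₂ ≫ q₀ = g := by
    have := congrArg (· ≫ (prod.fst : Z ⨯ Z ⟶ Z)) hm₂
    simpa [hq₀] using this
  have hm₂₁ : m₂ ≫ q₁ = k := by
    have := congrArg (· ≫ (prod.snd : Z ⨯ Z ⟶ Z)) hm₂
    simpa [hq₁] using this
  -- glue the two path homotopies by a pullback
  have hcond : d.i ≫ q₁ = d.i ≫ q₀ := by rw [e₀, e₁]
  have hsnd := M.trivfib_pullback_snd q₁ q₀ ⟨hq₁w, hq₁f⟩
  set P' := pullback q₁ q₀ with hP'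
  set w' : Z ⟶ P' := pullback.lift d.i d.i hcond with hw'
  have hw'w : M.weq w' :=
    M.weq.of_postcomp w' (pullback.snd q₁ q₀) hsnd.1
      (by rw [hw', pullback.lift_snd]; exact d.hi.1)
  set r₀ : P' ⟶ Z := pullback.fst q₁ q₀ ≫ q₀ with hr₀
  set r₁ : P' ⟶ Z := pullback.snd q₁ q₀ ≫ q₁ with hr₁
  have hm : m₁ ≫ q₁ = m₂ ≫ q₀ := by rw [hm₁₁, hm₂₀]
  refine RH.toLH hZ ⟨P', w', r₀, r₁, pullback.lift m₁ m₂ hm, hw'w, ?_, ?_, ?_, ?_⟩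
  · rw [hw', hr₀, ← Category.assoc, pullback.lift_fst, e₀]
  · rw [hw', hr₁, ← Category.assoc, pullback.lift_snd, e₁]
  · rw [hr₀, ← Category.assoc, pullback.lift_fst, hm₁₀]
  · rw [hr₁, ← Category.assoc, pullback.lift_snd, hm₂₁]

lemma LH.equivalence [HasInitial C] [HasTerminal C] [HasFiniteLimits C] {B Z : C}
    [HasBinaryCoproduct B B] (hB : M.cof (initial.to B)) (hZ : M.fib (terminal.from Z)) :
    Equivalence (M.LH (B := B) (Z := Z)) :=
  ⟨LH.refl, LH.symm, fun h h' => LH.trans hB hZ h h'⟩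

lemma LH.quot_eq_iff [HasInitial C] [HasTerminal C] [HasFiniteLimits C] {B Z : C}
    [HasBinaryCoproduct B B] (hB : M.cof (initial.to B)) (hZ : M.fib (terminal.from Z))
    {f g : B ⟶ Z} :
    Quot.mk (M.LH (B := B) (Z := Z)) f = Quot.mk (M.LH (B := B) (Z := Z)) g ↔ M.LH f g := by
  rw [Quot.eq, (LH.equivalence hB hZ).eqvGen_iff]

end ModelStructure
namespace ModelStructure

open CategoryTheory CategoryTheory.Limits MorphismProperty

variable {C : Type u} [Category.{v} C] (M : ModelStructure C)

section Replacement

variable [HasTerminal C]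

/-- A chosen fibrant replacement datum. -/
noncomputable def fr (Y : C) :
    MapFactorizationData (fun _ _ f => M.weq f ∧ M.cof f) M.fib (terminal.from Y) :=
  (M.cm5a.nonempty_mapFactorizationData _).some

/-- The fibrant replacement object. -/
noncomputable def R (Y : C) : C := (M.fr Y).Z

/-- The trivial cofibration into the fibrant replacement. -/
noncomputable def jR (Y : C) : Y ⟶ M.R Y := (M.fr Y).i

lemma jR_weq (Y : C) : M.weq (M.jR Y) := (M.fr Y).hi.1

lemma jR_cof (Y : C) : M.cof (M.jR Y) := (M.fr Y).hi.2

lemma R_fibrant (Y : C) : M.fib (terminal.from (M.R Y)) := by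
  have : terminal.from (M.R Y) = (M.fr Y).p := Subsingleton.elim _ _
  rw [this]; exact (M.fr Y).hp

/-- The chosen lift of a morphism to fibrant replacements. -/
noncomputable def rmap {Y Z : C} (u : Y ⟶ Z) : M.R Y ⟶ M.R Z := by
  haveI := M.cm4a (M.jR Y) (terminal.from (M.R Z)) (M.jR_cof Y) (M.jR_weq Y) (M.R_fibrant Z)
  have sq : CommSq (u ≫ M.jR Z) (M.jR Y) (terminal.from (M.R Z)) (terminal.from (M.R Y)) :=
    ⟨Subsingleton.elim _ _⟩
  exact sq.lift

lemma rmap_fac {Y Z : C} (u : Y ⟶ Z) : M.jR Y ≫ M.rmap u = u ≫ M.jR Z := by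
  haveI := M.cm4a (M.jR Y) (terminal.from (M.R Z)) (M.jR_cof Y) (M.jR_weq Y) (M.R_fibrant Z)
  exact CommSq.fac_left _

lemma rmap_weq {Y Z : C} {u : Y ⟶ Z} (hu : M.weq u) : M.weq (M.rmap u) := by
  haveI := M.cm2
  exact M.weq.of_precomp (M.jR Y) (M.rmap u) (M.jR_weq Y)
    (by rw [M.rmap_fac u]; exact M.weq.comp_mem _ _ hu (M.jR_weq Z))

end Replacement

section HtpyFunctor

variable [HasTerminal C] [HasInitial C] [HasFiniteLimits C] [HasFiniteColimits C]
variable {A : C}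

/-- The key fact: two morphisms into a fibrant replacement that become equal after
precomposition with `jR` are left homotopic after precomposition with anything. -/
lemma LH_postcomp_of_jR_eq {Y : C} {E : C} (hE : M.fib (terminal.from E))
    {v v' : M.R Y ⟶ E} (h : M.jR Y ≫ v = M.jR Y ≫ v') (k : A ⟶ M.R Y) :
    M.LH (k ≫ v) (k ≫ v') := by
  have hr : M.RH v v' := RH_of_lift_unique (M.jR Y) (M.jR_weq Y) (M.jR_cof Y) v v' h
  exact RH.toLH hE (hr.precomp k)

/-- Post-composition on homotopy classes. -/
noncomputable def Phi {E₁ E₂ : C} (m : E₁ ⟶ E₂) :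
    Quot (M.LH (B := A) (Z := E₁)) → Quot (M.LH (B := A) (Z := E₂)) :=
  Quot.map (· ≫ m) (fun _ _ h => h.postcomp m)

lemma Phi_mk {E₁ E₂ : C} (m : E₁ ⟶ E₂) (k : A ⟶ E₁) :
    Phi M (A := A) m (Quot.mk _ k) = Quot.mk _ (k ≫ m) := rfl

lemma Phi_comp {E₁ E₂ E₃ : C} (m : E₁ ⟶ E₂) (m' : E₂ ⟶ E₃) (x : Quot (M.LH (B := A) (Z := E₁))) :
    Phi M (m ≫ m') x = Phi M m' (Phi M m x) := by
  obtain ⟨k, rfl⟩ := Quot.exists_rep x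
  rw [Phi_mk, Phi_mk, Phi_mk, Category.assoc]

/-- Bijectivity of post-composition with a trivial fibration on homotopy classes. -/
lemma Phi_bij_of_trivfib (hA : M.cof (initial.to A)) {E₁ E₂ : C}
    (hE₂ : M.fib (terminal.from E₂)) (q : E₁ ⟶ E₂)
    (hqw : M.weq q) (hqf : M.fib q) :
    Function.Bijective (Phi M (A := A) q) := by
  constructor
  · intro x y h
    obtain ⟨k, rfl⟩ := Quot.exists_rep x
    obtain ⟨k', rfl⟩ := Quot.exists_rep y
    rw [Phi_mk, Phi_mk, LH.quot_eq_iff hA hE₂] at h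
    exact Quot.sound (LH_of_postcomp_trivfib q hqw hqf h)
  · intro y
    obtain ⟨f, rfl⟩ := Quot.exists_rep y
    obtain ⟨k, hk⟩ := surj_through_trivfib q hqw hqf hA f
    exact ⟨Quot.mk _ k, by rw [Phi_mk, hk]⟩

/-- Whitehead-type lemma: post-composition with a weak equivalence between fibrant
objects is a bijection on homotopy classes from a cofibrant object. -/
lemma Phi_bij_of_weq (hA : M.cof (initial.to A)) {E₁ E₂ : C} (hE₁ : M.fib (terminal.from E₁))
    (hE₂ : M.fib (terminal.from E₂)) (u : E₁ ⟶ E₂) (hu : M.weq u) :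
    Function.Bijective (Phi M (A := A) u) := by
  haveI := M.cm2
  -- Ken Brown factorization
  obtain ⟨d⟩ := M.cm5a.nonempty_mapFactorizationData (prod.lift (𝟙 E₁) u)
  set p₁ : d.Z ⟶ E₁ := d.p ≫ prod.fst with hp₁
  set q : d.Z ⟶ E₂ := d.p ≫ prod.snd with hq
  have ep₁ : d.i ≫ p₁ = 𝟙 E₁ := by rw [hp₁, ← Category.assoc, d.fac]; simp
  have eq₁ : d.i ≫ q = u := by rw [hq, ← Category.assoc, d.fac]; simp
  have hp₁f : M.fib p₁ := M.fib_comp d.hp (M.fib_fst hE₂)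
  have hp₁w : M.weq p₁ :=
    M.weq.of_precomp d.i p₁ d.hi.1 (by rw [ep₁]; exact M.weq_id E₁)
  have hqf : M.fib q := M.fib_comp d.hp (M.fib_snd hE₁)
  have hqw : M.weq q := M.weq.of_precomp d.i q d.hi.1 (by rw [eq₁]; exact hu)
  have bp₁ : Function.Bijective (Phi M (A := A) p₁) := Phi_bij_of_trivfib M hA hE₁ p₁ hp₁w hp₁f
  have bq : Function.Bijective (Phi M (A := A) q) := Phi_bij_of_trivfib M hA hE₂ q hqw hqf
  have hji : ∀ x, Phi M (A := A) p₁ (Phi M d.i x) = x := by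
    intro x
    rw [← Phi_comp, ep₁]
    obtain ⟨k, rfl⟩ := Quot.exists_rep x
    rw [Phi_mk, Category.comp_id]
  have bji : Function.Bijective (Phi M (A := A) d.i) := by
    constructor
    · intro x y h
      rw [← hji x, ← hji y, h]
    · intro y
      refine ⟨Phi M p₁ y, bp₁.1 ?_⟩
      rw [hji]
  have : Phi M (A := A) u = fun x => Phi M q (Phi M d.i x) := by
    funext x
    rw [← Phi_comp, eq₁]
  rw [this]
  exact Function.Bijective.comp bq bji

/-- The homotopy-classes functor `C ⥤ Type v`. -/
noncomputable def F : C ⥤ Type v where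
  obj Y := Quot (M.LH (B := A) (Z := M.R Y))
  map {Y Z} u := TypeCat.ofHom (Phi M (M.rmap u))
  map_id Y := by
    ext x
    obtain ⟨k, rfl⟩ := Quot.exists_rep x
    show Phi M (M.rmap (𝟙 Y)) (Quot.mk _ k) = Quot.mk _ k
    rw [Phi_mk]
    have h : M.LH (k ≫ M.rmap (𝟙 Y)) (k ≫ 𝟙 (M.R Y)) := by
      refine LH_postcomp_of_jR_eq M (M.R_fibrant Y) ?_ k
      rw [M.rmap_fac (𝟙 Y), Category.id_comp, Category.comp_id]
    have := Quot.sound h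
    rw [Category.comp_id] at this
    exact this
  map_comp {Y Z W} u v := by
    ext x
    obtain ⟨k, rfl⟩ := Quot.exists_rep x
    show Phi M (M.rmap (u ≫ v)) (Quot.mk _ k) = Phi M (M.rmap v) (Phi M (M.rmap u) (Quot.mk _ k))
    rw [← Phi_comp]
    apply Quot.sound
    refine LH_postcomp_of_jR_eq M (M.R_fibrant W) ?_ k
    rw [M.rmap_fac (u ≫ v), ← Category.assoc (M.jR Y) (M.rmap u) (M.rmap v), M.rmap_fac u,
      Category.assoc u (M.jR Z) (M.rmap v), M.rmap_fac v, ← Category.assoc]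

lemma F_inverts (hA : M.cof (initial.to A)) :
    M.weq.IsInvertedBy (F M (A := A) ⋙ uliftFunctor.{u, v}) := by
  intro Y Z u hu
  haveI : IsIso ((F M (A := A)).map u) := (CategoryTheory.isIso_iff_bijective _).2
    (Phi_bij_of_weq M hA (M.R_fibrant Y) (M.R_fibrant Z) (M.rmap u) (M.rmap_weq hu))
  show IsIso (uliftFunctor.{u, v}.map ((F M (A := A)).map u))
  infer_instance

end HtpyFunctor

end ModelStructure
namespace ModelStructure

open CategoryTheory CategoryTheory.Limits MorphismProperty

variable {C : Type u} [Category.{v} C] (M : ModelStructure C)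
variable [HasTerminal C] [HasInitial C] [HasFiniteLimits C] [HasFiniteColimits C]
variable {A : C}

/-- The homotopy classes functor, lifted to large enough universe. -/
noncomputable def Fhat : C ⥤ Type (max u v) := F M (A := A) ⋙ uliftFunctor.{u, v}

/-- The induced functor on the localization. -/
noncomputable def Ghat (hA : M.cof (initial.to A)) : M.weq.Localization ⥤ Type (max u v) :=
  CategoryTheory.Localization.Construction.lift (Fhat M) (F_inverts M hA)

/-- The comparison map from homotopy classes to morphisms in the localization. -/
noncomputable def theta (Y : C) :
    (Fhat M (A := A)).obj Y → (M.weq.Q.obj A ⟶ M.weq.Q.obj Y) := by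
  haveI : IsIso (M.weq.Q.map (M.jR Y)) := M.weq.Q_inverts _ (M.jR_weq Y)
  exact fun x => Quot.liftOn x.down
    (fun k => M.weq.Q.map k ≫ CategoryTheory.inv (M.weq.Q.map (M.jR Y)))
    (fun k k' h => by rw [LH.map_eq h])

lemma theta_mk (Y : C) (k : A ⟶ M.R Y)
    (hiso : IsIso (M.weq.Q.map (M.jR Y))) :
    theta M Y (ULift.up (Quot.mk _ k)) =
      M.weq.Q.map k ≫ CategoryTheory.inv (M.weq.Q.map (M.jR Y)) := rfl

/-- `theta` as a natural transformation on `C`. -/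
noncomputable def tau (hA : M.cof (initial.to A)) :
    M.weq.Q ⋙ Ghat M hA ⟶ M.weq.Q ⋙ coyoneda.obj (Opposite.op (M.weq.Q.obj A)) where
  app Y := TypeCat.ofHom (theta M Y)
  naturality {Y Z} u := by
    haveI hY : IsIso (M.weq.Q.map (M.jR Y)) := M.weq.Q_inverts _ (M.jR_weq Y)
    haveI hZ : IsIso (M.weq.Q.map (M.jR Z)) := M.weq.Q_inverts _ (M.jR_weq Z)
    ext x
    show theta M Z ((Fhat M (A := A)).map u x) = theta M Y x ≫ M.weq.Q.map u
    obtain ⟨k, hk⟩ := Quot.exists_rep x.down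
    have hx : x = ULift.up (Quot.mk _ k) := by
      cases x; cases hk; rfl
    subst hx
    have hmap : (Fhat M (A := A)).map u (ULift.up (Quot.mk _ k)) =
        ULift.up (Quot.mk _ (k ≫ M.rmap u)) := rfl
    show theta M Z (ULift.up (Quot.mk _ (k ≫ M.rmap u))) = theta M Y (ULift.up (Quot.mk _ k)) ≫ M.weq.Q.map u
    rw [theta_mk M Z _ hZ, theta_mk M Y k hY]
    have e : M.weq.Q.map (M.jR Y) ≫ M.weq.Q.map (M.rmap u) =
        M.weq.Q.map u ≫ M.weq.Q.map (M.jR Z) := by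
      rw [← M.weq.Q.map_comp, ← M.weq.Q.map_comp, M.rmap_fac]
    have e2 : CategoryTheory.inv (M.weq.Q.map (M.jR Y)) ≫ M.weq.Q.map u ≫
        M.weq.Q.map (M.jR Z) = M.weq.Q.map (M.rmap u) := by
      rw [← e, IsIso.inv_hom_id_assoc]
    have e3 : M.weq.Q.map (M.rmap u) ≫ CategoryTheory.inv (M.weq.Q.map (M.jR Z)) =
        CategoryTheory.inv (M.weq.Q.map (M.jR Y)) ≫ M.weq.Q.map u := by
      rw [← e2, Category.assoc, Category.assoc, IsIso.hom_inv_id, Category.comp_id]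
    rw [M.weq.Q.map_comp, Category.assoc]
    exact (congrArg (M.weq.Q.map k ≫ ·) e3).trans (Category.assoc _ _ _).symm

/-- The extension of `tau` to the localization. -/
noncomputable def Theta (hA : M.cof (initial.to A)) :
    Ghat M hA ⟶ coyoneda.obj (Opposite.op (M.weq.Q.obj A)) :=
  CategoryTheory.Localization.Construction.natTransExtension (tau M hA)

/-- The basepoint in `Ghat (Q A)`. -/
noncomputable def pt : (F M (A := A)).obj A := Quot.mk _ (M.jR A)

noncomputable def pthat (hA : M.cof (initial.to A)) :
    (Ghat M hA).obj (M.weq.Q.obj A) := ULift.up (pt M)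

/-- The key identity: `Theta` recovers any morphism out of `Q A`. -/
lemma Theta_Ghat_pt (hA : M.cof (initial.to A)) {U : M.weq.Localization}
    (φ : M.weq.Q.obj A ⟶ U) :
    (Theta M hA).app U ((Ghat M hA).map φ (pthat M hA)) = φ := by
  haveI hiso : IsIso (M.weq.Q.map (M.jR A)) := M.weq.Q_inverts _ (M.jR_weq A)
  have happ : (Theta M hA).app (M.weq.Q.obj A) (pthat M hA) = 𝟙 (M.weq.Q.obj A) := by
    have e1 : (Theta M hA).app (M.weq.Q.obj A) = (tau M hA).app A :=
      CategoryTheory.Localization.Construction.NatTransExtension.app_eq (tau M hA) A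
    rw [e1]
    show theta M A (ULift.up (Quot.mk _ (M.jR A))) = 𝟙 _
    rw [theta_mk M A (M.jR A) hiso]
    exact IsIso.hom_inv_id _
  have hnat := congrArg (fun m => m (pthat M hA)) ((Theta M hA).naturality φ)
  simp only [types_comp_apply] at hnat
  rw [hnat]
  show (Theta M hA).app _ (pthat M hA) ≫ φ = φ
  rw [happ, Category.id_comp]

end ModelStructure

open ModelStructure

/-- **Quillen.** Let `C` be a model category, `A` a cofibrant object,
`X` a fibrant object, and `X ⟶ PX ⟶ X × X` a path object for `X` (a factorization of the
diagonal as a weak equivalence `w` followed by a fibration `p = (p₀, p₁)`). Then the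
canonical map `Hom_C(A, X) → Hom_{Ho(C)}(A, X)` into the localization of `C` at the weak
equivalences is surjective, and two morphisms `f g : A ⟶ X` become equal in `Ho(C)` if
and only if there is `h : A ⟶ PX` with `h ≫ p = (f, g)`.  In other words,
`Hom_{Ho(C)}(A, X)` is the coequalizer of `Hom_C(A, PX) ⇉ Hom_C(A, X)`. -/
theorem homotopyCategory_hom_of_cofibrant_fibrant
    {C : Type u} [Category.{v} C] (M : ModelStructure C)
    [HasInitial C] [HasTerminal C]
    (A X PX : C) [HasBinaryProduct X X]
    (hA : M.cof (initial.to A)) (hX : M.fib (terminal.from X))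
    (w : X ⟶ PX) (p₀ p₁ : PX ⟶ X)
    (hw : M.weq w) (hp : M.fib (prod.lift p₀ p₁))
    (hfac : w ≫ prod.lift p₀ p₁ = prod.lift (𝟙 X) (𝟙 X)) :
    Function.Surjective (fun f : A ⟶ X => M.weq.Q.map f :
      (A ⟶ X) → (M.weq.Q.obj A ⟶ M.weq.Q.obj X)) ∧
    (∀ f g : A ⟶ X, M.weq.Q.map f = M.weq.Q.map g ↔
      ∃ h : A ⟶ PX, h ≫ prod.lift p₀ p₁ = prod.lift f g) := by
  haveI := M.cm1a
  haveI := M.cm1b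
  haveI := M.cm2
  -- a retraction of the fibrant replacement of X
  haveI := M.cm4a (M.jR X) (terminal.from X) (M.jR_cof X) (M.jR_weq X) hX
  have sqr : CommSq (𝟙 X) (M.jR X) (terminal.from X) (terminal.from (M.R X)) :=
    ⟨Subsingleton.elim _ _⟩
  have hr : M.jR X ≫ sqr.lift = 𝟙 X := sqr.fac_left
  haveI hisoX : IsIso (M.weq.Q.map (M.jR X)) := M.weq.Q_inverts _ (M.jR_weq X)
  have hinv : CategoryTheory.inv (M.weq.Q.map (M.jR X)) = M.weq.Q.map sqr.lift :=
    IsIso.inv_eq_of_hom_inv_id (by rw [← M.weq.Q.map_comp, hr, M.weq.Q.map_id])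
  constructor
  · intro φ
    have e1 : (Theta M hA).app (M.weq.Q.obj X) = (tau M hA).app X :=
      CategoryTheory.Localization.Construction.NatTransExtension.app_eq (tau M hA) X
    let x : (Fhat M (A := A)).obj X := (Ghat M hA).map φ (pthat M hA)
    obtain ⟨k, hk⟩ := Quot.exists_rep x.down
    have hx2 : x = ULift.up (Quot.mk _ k) := hk ▸ rfl
    refine ⟨k ≫ sqr.lift, ?_⟩
    show M.weq.Q.map (k ≫ sqr.lift) = φ
    calc M.weq.Q.map (k ≫ sqr.lift)
        = M.weq.Q.map k ≫ M.weq.Q.map sqr.lift := by rw [M.weq.Q.map_comp]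
      _ = M.weq.Q.map k ≫ CategoryTheory.inv (M.weq.Q.map (M.jR X)) := by rw [hinv]
      _ = theta M X x := by rw [hx2]; rfl
      _ = (Theta M hA).app (M.weq.Q.obj X) x := (congrArg (fun m => m x) e1).symm
      _ = φ := Theta_Ghat_pt M hA φ
  · intro f g
    constructor
    · intro hQ
      have hfg : (Ghat M hA).map (M.weq.Q.map f) (pthat M hA) =
          (Ghat M hA).map (M.weq.Q.map g) (pthat M hA) := by rw [hQ]
      have hfg' : Quot.mk (M.LH (B := A) (Z := M.R X)) (M.jR A ≫ M.rmap f) =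
          Quot.mk (M.LH (B := A) (Z := M.R X)) (M.jR A ≫ M.rmap g) :=
        congrArg ULift.down hfg
      rw [LH.quot_eq_iff hA (M.R_fibrant X)] at hfg'
      rw [M.rmap_fac f, M.rmap_fac g] at hfg'
      have h3 := hfg'.postcomp sqr.lift
      simp only [Category.assoc, hr, Category.comp_id] at h3
      exact LH.toRH_given hA w p₀ p₁ hw hp hfac h3
    · rintro ⟨h, hh⟩
      have h₀ : h ≫ p₀ = f := by
        simpa using congrArg (· ≫ (prod.fst : X ⨯ X ⟶ X)) hh
      have h₁ : h ≫ p₁ = g := by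
        simpa using congrArg (· ≫ (prod.snd : X ⨯ X ⟶ X)) hh
      have e₀ : w ≫ p₀ = 𝟙 X := by
        simpa using congrArg (· ≫ (prod.fst : X ⨯ X ⟶ X)) hfac
      have e₁ : w ≫ p₁ = 𝟙 X := by
        simpa using congrArg (· ≫ (prod.snd : X ⨯ X ⟶ X)) hfac
      haveI : IsIso (M.weq.Q.map w) := M.weq.Q_inverts w hw
      have q0 : M.weq.Q.map p₀ = CategoryTheory.inv (M.weq.Q.map w) :=
        (IsIso.inv_eq_of_hom_inv_id (by rw [← M.weq.Q.map_comp, e₀, M.weq.Q.map_id])).symm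
      have q1 : M.weq.Q.map p₁ = CategoryTheory.inv (M.weq.Q.map w) :=
        (IsIso.inv_eq_of_hom_inv_id (by rw [← M.weq.Q.map_comp, e₁, M.weq.Q.map_id])).symm
      rw [← h₀, ← h₁, M.weq.Q.map_comp, M.weq.Q.map_comp, q0, q1]
end

section
/- Let C and D be model categories and G : C → D a right Quillen functor (G has a left adjoint and preserves fibrations and trivial fibrations). Then G admits a right derived functor RG : Ho(C) → Ho(D): there is a functor RG together with a natural transformation η : λ_D ∘ G → RG ∘ λ_C (where λ_C : C → Ho(C) and λ_D : D → Ho(D) are the localization functors) through which every natural transformation λ_D ∘ G → H ∘ λ_C factors essentially uniquely. Moreover, for every object A of C and every weak equivalence A → Â with Â fibrant, RG(A) is isomorphic in Ho(D) to G(Â). -/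
/-!
STATEMENT 2: a right Quillen functor admits a (total) right derived functor,
computed via fibrant replacement (Quillen).
-/

open CategoryTheory CategoryTheory.Limits

universe v v' u u'

set_option linter.unusedSectionVars false

namespace QuillenAux

variable {C : Type u} [Category.{v} C] (MC : ModelStructure C) [HasTerminal C]

lemma weq_id (X : C) : MC.weq (𝟙 X) := by
  obtain ⟨d⟩ := MC.cm5b.nonempty_mapFactorizationData (𝟙 X)
  exact MC.cm3a (𝟙 X) d.p d.i d.p (𝟙 X) (𝟙 X) d.fac (by simp)
    (by simp [d.fac]) (by simp) d.hp.1

lemma fib_of_rlp {X Y : C} (f : X ⟶ Y)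
    (h : ∀ ⦃A B : C⦄ (i : A ⟶ B), MC.cof i → MC.weq i → HasLiftingProperty i f) :
    MC.fib f := by
  obtain ⟨d⟩ := MC.cm5a.nonempty_mapFactorizationData f
  haveI := h d.i d.hi.2 d.hi.1
  have sq : CommSq (𝟙 X) d.i f d.p := ⟨by simp [d.fac]⟩
  exact MC.cm3b f d.p d.i sq.lift (𝟙 Y) (𝟙 Y) sq.fac_left (by simp)
    (by simp [d.fac]) (by simp [sq.fac_right]) d.hp

lemma hlp_fst {U V A B : C} [HasBinaryProducts C] (i : A ⟶ B) (hc : MC.cof i) (hw : MC.weq i)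
    (hV : MC.fib (terminal.from V)) :
    HasLiftingProperty i (prod.fst : U ⨯ V ⟶ U) := by
  constructor
  intro f g sq
  haveI := MC.cm4a i (terminal.from V) hc hw hV
  have sq2 : CommSq (f ≫ prod.snd) i (terminal.from V) (terminal.from B) :=
    ⟨terminal.hom_ext _ _⟩
  exact ⟨⟨⟨prod.lift g sq2.lift,
    by apply Limits.prod.hom_ext
       · rw [Category.assoc, prod.lift_fst, ← sq.w]
       · rw [Category.assoc, prod.lift_snd, sq2.fac_left],
    by simp [prod.lift_fst]⟩⟩⟩

lemma hlp_snd {U V A B : C} [HasBinaryProducts C] (i : A ⟶ B) (hc : MC.cof i) (hw : MC.weq i)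
    (hU : MC.fib (terminal.from U)) :
    HasLiftingProperty i (prod.snd : U ⨯ V ⟶ V) := by
  constructor
  intro f g sq
  haveI := MC.cm4a i (terminal.from U) hc hw hU
  have sq2 : CommSq (f ≫ prod.fst) i (terminal.from U) (terminal.from B) :=
    ⟨terminal.hom_ext _ _⟩
  exact ⟨⟨⟨prod.lift sq2.lift g,
    by apply Limits.prod.hom_ext
       · rw [Category.assoc, prod.lift_fst, sq2.fac_left]
       · rw [Category.assoc, prod.lift_snd, ← sq.w],
    by simp [prod.lift_snd]⟩⟩⟩

lemma fib_comp_fst {E U V : C} [HasBinaryProducts C] (q : E ⟶ U ⨯ V) (hq : MC.fib q)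
    (hV : MC.fib (terminal.from V)) : MC.fib (q ≫ prod.fst) := by
  apply fib_of_rlp
  intro A B i hc hw
  haveI := MC.cm4a i q hc hw hq
  haveI := hlp_fst (U := U) MC i hc hw hV
  infer_instance

lemma fib_comp_snd {E U V : C} [HasBinaryProducts C] (q : E ⟶ U ⨯ V) (hq : MC.fib q)
    (hU : MC.fib (terminal.from U)) : MC.fib (q ≫ prod.snd) := by
  apply fib_of_rlp
  intro A B i hc hw
  haveI := MC.cm4a i q hc hw hq
  haveI := hlp_snd (V := V) MC i hc hw hU
  infer_instance


variable {D : Type u'} [Category.{v'} D] (MD : ModelStructure D) (G : C ⥤ D)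

/-- Ken Brown's lemma combined with localization. -/
lemma kenBrown
    (hGtf : ∀ ⦃X Y : C⦄ (p : X ⟶ Y), MC.fib p → MC.weq p →
      MD.fib (G.map p) ∧ MD.weq (G.map p))
    {X Y : C} (f : X ⟶ Y) (hf : MC.weq f)
    (hX : MC.fib (terminal.from X)) (hY : MC.fib (terminal.from Y)) :
    IsIso (MD.weq.Q.map (G.map f)) := by
  haveI := MC.cm1a
  haveI := MC.cm2
  obtain ⟨d⟩ := MC.cm5a.nonempty_mapFactorizationData (prod.lift f (𝟙 X))
  have e0 : d.i ≫ (d.p ≫ prod.fst) = f := by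
    rw [← Category.assoc, d.fac, prod.lift_fst]
  have e1 : d.i ≫ (d.p ≫ prod.snd) = 𝟙 X := by
    rw [← Category.assoc, d.fac, prod.lift_snd]
  have h0f := fib_comp_fst MC d.p d.hp hX
  have h1f := fib_comp_snd MC d.p d.hp hY
  have h0w : MC.weq (d.p ≫ prod.fst) :=
    MC.weq.of_precomp d.i _ d.hi.1 (by rw [e0]; exact hf)
  have h1w : MC.weq (d.p ≫ prod.snd) :=
    MC.weq.of_precomp d.i _ d.hi.1 (by rw [e1]; exact weq_id MC X)
  haveI : IsIso (MD.weq.Q.map (G.map (d.p ≫ prod.fst))) :=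
    Localization.inverts MD.weq.Q MD.weq _ (hGtf _ h0f h0w).2
  haveI : IsIso (MD.weq.Q.map (G.map (d.p ≫ prod.snd))) :=
    Localization.inverts MD.weq.Q MD.weq _ (hGtf _ h1f h1w).2
  have c1 : MD.weq.Q.map (G.map d.i) ≫ MD.weq.Q.map (G.map (d.p ≫ prod.snd)) = 𝟙 _ := by
    rw [← Functor.map_comp, ← Functor.map_comp, e1]; simp
  haveI : IsIso (MD.weq.Q.map (G.map d.i)) := by
    have ha : MD.weq.Q.map (G.map d.i)
        = inv (MD.weq.Q.map (G.map (d.p ≫ prod.snd))) := by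
      calc MD.weq.Q.map (G.map d.i)
          = (MD.weq.Q.map (G.map d.i) ≫ MD.weq.Q.map (G.map (d.p ≫ prod.snd)))
              ≫ inv (MD.weq.Q.map (G.map (d.p ≫ prod.snd))) := by
            rw [Category.assoc, IsIso.hom_inv_id, Category.comp_id]
        _ = inv (MD.weq.Q.map (G.map (d.p ≫ prod.snd))) := by
            rw [c1, Category.id_comp]
    rw [ha]; infer_instance
  have hfeq : MD.weq.Q.map (G.map f)
      = MD.weq.Q.map (G.map d.i) ≫ MD.weq.Q.map (G.map (d.p ≫ prod.fst)) := by
    rw [← Functor.map_comp, ← Functor.map_comp, e0]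
  rw [hfeq]; infer_instance

/-- A chosen fibrant replacement. -/
noncomputable def rep (A : C) :=
  (MC.cm5a.nonempty_mapFactorizationData (terminal.from A)).some

noncomputable def Zo (A : C) : C := (rep MC A).Z

noncomputable def ι (A : C) : A ⟶ Zo MC A := (rep MC A).i

lemma weq_ι (A : C) : MC.weq (ι MC A) := (rep MC A).hi.1
lemma cof_ι (A : C) : MC.cof (ι MC A) := (rep MC A).hi.2

lemma fib_Zo (A : C) : MC.fib (terminal.from (Zo MC A)) := by
  have h := (rep MC A).hp
  rwa [show (rep MC A).p = terminal.from _ from terminal.hom_ext _ _] at h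

lemma lsq {A B : C} (f : A ⟶ B) :
    CommSq (f ≫ ι MC B) (ι MC A) (terminal.from (Zo MC B)) (terminal.from (Zo MC A)) :=
  ⟨terminal.hom_ext _ _⟩

/-- The chosen lift of a morphism to fibrant replacements. -/
noncomputable def Lm {A B : C} (f : A ⟶ B) : Zo MC A ⟶ Zo MC B :=
  haveI := MC.cm4a (ι MC A) (terminal.from (Zo MC B)) (cof_ι MC A) (weq_ι MC A) (fib_Zo MC B)
  (lsq MC f).lift

lemma ι_Lm {A B : C} (f : A ⟶ B) : ι MC A ≫ Lm MC f = f ≫ ι MC B :=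
  haveI := MC.cm4a (ι MC A) (terminal.from (Zo MC B)) (cof_ι MC A) (weq_ι MC A) (fib_Zo MC B)
  (lsq MC f).fac_left

/-- Two lifts agreeing after `ι` become equal in the localization after applying `G`. -/
lemma Qeq
    (hGtf : ∀ ⦃X Y : C⦄ (p : X ⟶ Y), MC.fib p → MC.weq p →
      MD.fib (G.map p) ∧ MD.weq (G.map p))
    {A B : C} (g₁ g₂ : Zo MC A ⟶ Zo MC B)
    (h : ι MC A ≫ g₁ = ι MC A ≫ g₂) :
    MD.weq.Q.map (G.map g₁) = MD.weq.Q.map (G.map g₂) := by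
  haveI := MC.cm1a
  haveI := MC.cm2
  obtain ⟨d⟩ := MC.cm5a.nonempty_mapFactorizationData
    (prod.lift (𝟙 (Zo MC B)) (𝟙 (Zo MC B)))
  have e0 : d.i ≫ (d.p ≫ prod.fst) = 𝟙 _ := by
    rw [← Category.assoc, d.fac, prod.lift_fst]
  have e1 : d.i ≫ (d.p ≫ prod.snd) = 𝟙 _ := by
    rw [← Category.assoc, d.fac, prod.lift_snd]
  have h0f := fib_comp_fst MC d.p d.hp (fib_Zo MC B)
  have h1f := fib_comp_snd MC d.p d.hp (fib_Zo MC B)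
  have h0w : MC.weq (d.p ≫ prod.fst) :=
    MC.weq.of_precomp d.i _ d.hi.1 (by rw [e0]; exact weq_id MC _)
  have h1w : MC.weq (d.p ≫ prod.snd) :=
    MC.weq.of_precomp d.i _ d.hi.1 (by rw [e1]; exact weq_id MC _)
  haveI := MC.cm4a (ι MC A) d.p (cof_ι MC A) (weq_ι MC A) d.hp
  have sq : CommSq (ι MC A ≫ g₁ ≫ d.i) (ι MC A) d.p (prod.lift g₁ g₂) := ⟨by
    have h1 : (ι MC A ≫ g₁ ≫ d.i) ≫ d.p = ι MC A ≫ g₁ ≫ prod.lift (𝟙 _) (𝟙 _) := by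
      simp only [Category.assoc, d.fac]
    rw [h1]
    apply Limits.prod.hom_ext
    · simp [prod.lift_fst]
    · simp [h, prod.lift_snd]⟩
  have r0 : sq.lift ≫ (d.p ≫ prod.fst) = g₁ := by
    rw [← Category.assoc, sq.fac_right]; simp [prod.lift_fst]
  have r1 : sq.lift ≫ (d.p ≫ prod.snd) = g₂ := by
    rw [← Category.assoc, sq.fac_right]; simp [prod.lift_snd]
  haveI : IsIso (MD.weq.Q.map (G.map (d.p ≫ prod.fst))) :=
    Localization.inverts MD.weq.Q MD.weq _ (hGtf _ h0f h0w).2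
  haveI : IsIso (MD.weq.Q.map (G.map (d.p ≫ prod.snd))) :=
    Localization.inverts MD.weq.Q MD.weq _ (hGtf _ h1f h1w).2
  have c0 : MD.weq.Q.map (G.map d.i) ≫ MD.weq.Q.map (G.map (d.p ≫ prod.fst)) = 𝟙 _ := by
    rw [← Functor.map_comp, ← Functor.map_comp, e0]; simp
  have c1 : MD.weq.Q.map (G.map d.i) ≫ MD.weq.Q.map (G.map (d.p ≫ prod.snd)) = 𝟙 _ := by
    rw [← Functor.map_comp, ← Functor.map_comp, e1]; simp
  haveI : IsIso (MD.weq.Q.map (G.map d.i)) := by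
    have ha : MD.weq.Q.map (G.map d.i)
        = inv (MD.weq.Q.map (G.map (d.p ≫ prod.snd))) := by
      calc MD.weq.Q.map (G.map d.i)
          = (MD.weq.Q.map (G.map d.i) ≫ MD.weq.Q.map (G.map (d.p ≫ prod.snd)))
              ≫ inv (MD.weq.Q.map (G.map (d.p ≫ prod.snd))) := by
            rw [Category.assoc, IsIso.hom_inv_id, Category.comp_id]
        _ = inv (MD.weq.Q.map (G.map (d.p ≫ prod.snd))) := by
            rw [c1, Category.id_comp]
    rw [ha]; infer_instance
  have hb : MD.weq.Q.map (G.map (d.p ≫ prod.fst))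
      = MD.weq.Q.map (G.map (d.p ≫ prod.snd)) :=
    (cancel_epi (MD.weq.Q.map (G.map d.i))).1 (c0.trans c1.symm)
  calc MD.weq.Q.map (G.map g₁)
      = MD.weq.Q.map (G.map sq.lift) ≫ MD.weq.Q.map (G.map (d.p ≫ prod.fst)) := by
        rw [← Functor.map_comp, ← Functor.map_comp, r0]
    _ = MD.weq.Q.map (G.map sq.lift) ≫ MD.weq.Q.map (G.map (d.p ≫ prod.snd)) := by rw [hb]
    _ = MD.weq.Q.map (G.map g₂) := by rw [← Functor.map_comp, ← Functor.map_comp, r1]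


variable (hGtf : ∀ ⦃X Y : C⦄ (p : X ⟶ Y), MC.fib p → MC.weq p →
      MD.fib (G.map p) ∧ MD.weq (G.map p))

/-- The fibrant-replacement composite `A ↦ Q_D (G (Zo A))`, as a functor. -/
noncomputable def Phi : C ⥤ MD.weq.Localization where
  obj A := MD.weq.Q.obj (G.obj (Zo MC A))
  map {A B} f := MD.weq.Q.map (G.map (Lm MC f))
  map_id A := by
    rw [Qeq MC MD G hGtf (Lm MC (𝟙 A)) (𝟙 _) (by rw [ι_Lm]; simp)]
    simp
  map_comp {A B E} f g := by
    rw [Qeq MC MD G hGtf (Lm MC (f ≫ g)) (Lm MC f ≫ Lm MC g) (by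
      rw [ι_Lm]
      have h2 : ι MC A ≫ Lm MC f ≫ Lm MC g = f ≫ g ≫ ι MC E := by
        rw [← Category.assoc, ι_Lm, Category.assoc, ι_Lm]
      rw [h2, Category.assoc])]
    rw [Functor.map_comp, Functor.map_comp]

lemma hPhi : MC.weq.IsInvertedBy (Phi MC MD G hGtf) := by
  intro A B f hf
  haveI := MC.cm2
  have hw : MC.weq (Lm MC f) :=
    MC.weq.of_precomp (ι MC A) _ (weq_ι MC A)
      (by rw [ι_Lm]; exact MC.weq.comp_mem _ _ hf (weq_ι MC B))
  exact kenBrown MC MD G hGtf _ hw (fib_Zo MC A) (fib_Zo MC B)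

/-- The total right derived functor. -/
noncomputable def RGaux : MC.weq.Localization ⥤ MD.weq.Localization :=
  Localization.lift (Phi MC MD G hGtf) (hPhi MC MD G hGtf) MC.weq.Q

noncomputable instance : Localization.Lifting MC.weq.Q MC.weq (Phi MC MD G hGtf)
    (RGaux MC MD G hGtf) :=
  Localization.liftingLift _ _ _

/-- the canonical isomorphism -/
noncomputable def facIso : MC.weq.Q ⋙ RGaux MC MD G hGtf ≅ Phi MC MD G hGtf :=
  Localization.fac _ _ _

/-- the comparison transformation to the fibrant replacement composite -/
noncomputable def τnat : G ⋙ MD.weq.Q ⟶ Phi MC MD G hGtf where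
  app A := MD.weq.Q.map (G.map (ι MC A))
  naturality {A B} f := by
    dsimp [Phi]
    rw [← Functor.map_comp, ← Functor.map_comp, ← Functor.map_comp, ← Functor.map_comp,
      ι_Lm]

/-- the canonical natural transformation to the右 derived functor -/
noncomputable def ηnat : G ⋙ MD.weq.Q ⟶ MC.weq.Q ⋙ RGaux MC MD G hGtf :=
  τnat MC MD G hGtf ≫ (facIso MC MD G hGtf).inv

lemma isIso_Qι (A : C) : IsIso (MC.weq.Q.map (ι MC A)) :=
  Localization.inverts MC.weq.Q MC.weq _ (weq_ι MC A)

lemma isIso_η_app_of_fibrant (B : C) (hB : MC.fib (terminal.from B)) :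
    IsIso ((ηnat MC MD G hGtf).app B) := by
  have : (ηnat MC MD G hGtf).app B
      = MD.weq.Q.map (G.map (ι MC B)) ≫ (facIso MC MD G hGtf).inv.app B := rfl
  rw [this]
  haveI : IsIso (MD.weq.Q.map (G.map (ι MC B))) :=
    kenBrown MC MD G hGtf _ (weq_ι MC B) hB (fib_Zo MC B)
  exact @IsIso.comp_isIso _ _ _ _ _ _ _ this (Iso.isIso_inv ((facIso MC MD G hGtf).app B))

/-- comparison to an arbitrary extension -/
noncomputable def σnat (H : MC.weq.Localization ⥤ MD.weq.Localization)
    (β : G ⋙ MD.weq.Q ⟶ MC.weq.Q ⋙ H) :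
    Phi MC MD G hGtf ⟶ MC.weq.Q ⋙ H where
  app A :=
    haveI := isIso_Qι MC A
    β.app (Zo MC A) ≫ H.map (inv (MC.weq.Q.map (ι MC A)))
  naturality {A B} f := by
    haveI := isIso_Qι MC A
    haveI := isIso_Qι MC B
    have key : MC.weq.Q.map (Lm MC f) ≫ inv (MC.weq.Q.map (ι MC B))
        = inv (MC.weq.Q.map (ι MC A)) ≫ MC.weq.Q.map f := by
      rw [IsIso.comp_inv_eq, Category.assoc, ← Functor.map_comp, ← ι_Lm,
        Functor.map_comp, IsIso.inv_hom_id_assoc]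
    have hnat := β.naturality (Lm MC f)
    dsimp at hnat ⊢
    dsimp [Phi]
    rw [← Category.assoc, hnat, Category.assoc, ← H.map_comp, key, H.map_comp,
      Category.assoc]

lemma η_desc_fac (H : MC.weq.Localization ⥤ MD.weq.Localization)
    (β : G ⋙ MD.weq.Q ⟶ MC.weq.Q ⋙ H) (A : C) :
    (ηnat MC MD G hGtf).app A ≫
      (Localization.liftNatTrans MC.weq.Q MC.weq (Phi MC MD G hGtf) (MC.weq.Q ⋙ H)
        (RGaux MC MD G hGtf) H (σnat MC MD G hGtf H β)).app (MC.weq.Q.obj A)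
      = β.app A := by
  haveI := isIso_Qι MC A
  rw [Localization.liftNatTrans_app]
  have h1 : (ηnat MC MD G hGtf).app A
      = (τnat MC MD G hGtf).app A ≫
          (Localization.Lifting.iso MC.weq.Q MC.weq (Phi MC MD G hGtf)
            (RGaux MC MD G hGtf)).inv.app A := rfl
  rw [h1]
  have h2 : (Localization.Lifting.iso MC.weq.Q MC.weq (MC.weq.Q ⋙ H) H).inv.app A
      = 𝟙 _ := rfl
  rw [h2, Category.comp_id, Category.assoc, Iso.inv_hom_id_app_assoc]
  have hnat := β.naturality (ι MC A)
  dsimp at hnat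
  have h3 : (τnat MC MD G hGtf).app A = MD.weq.Q.map (G.map (ι MC A)) := rfl
  have h4 : (σnat MC MD G hGtf H β).app A
      = β.app (Zo MC A) ≫ H.map (inv (MC.weq.Q.map (ι MC A))) := rfl
  rw [h3, h4]
  show MD.weq.Q.map (G.map (ι MC A)) ≫ β.app (Zo MC A) ≫ H.map (inv (MC.weq.Q.map (ι MC A))) = β.app A
  rw [← Category.assoc, hnat, Category.assoc, ← H.map_comp,
    IsIso.hom_inv_id, H.map_id, Category.comp_id]

lemma γ_uniq (H : MC.weq.Localization ⥤ MD.weq.Localization)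
    (β : G ⋙ MD.weq.Q ⟶ MC.weq.Q ⋙ H) (γ₁ γ₂ : RGaux MC MD G hGtf ⟶ H)
    (h₁ : ∀ A : C, (ηnat MC MD G hGtf).app A ≫ γ₁.app (MC.weq.Q.obj A) = β.app A)
    (h₂ : ∀ A : C, (ηnat MC MD G hGtf).app A ≫ γ₂.app (MC.weq.Q.obj A) = β.app A) :
    γ₁ = γ₂ := by
  apply Localization.natTrans_ext MC.weq.Q MC.weq
  intro A
  haveI := isIso_Qι MC A
  haveI := isIso_η_app_of_fibrant MC MD G hGtf (Zo MC A) (fib_Zo MC A)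
  have hZ : γ₁.app (MC.weq.Q.obj (Zo MC A)) = γ₂.app (MC.weq.Q.obj (Zo MC A)) :=
    (cancel_epi ((ηnat MC MD G hGtf).app (Zo MC A))).1 ((h₁ _).trans (h₂ _).symm)
  have n1 := γ₁.naturality (MC.weq.Q.map (ι MC A))
  have n2 := γ₂.naturality (MC.weq.Q.map (ι MC A))
  have e1 : γ₁.app (MC.weq.Q.obj A)
      = ((RGaux MC MD G hGtf).map (MC.weq.Q.map (ι MC A)) ≫
          γ₁.app (MC.weq.Q.obj (Zo MC A))) ≫ inv (H.map (MC.weq.Q.map (ι MC A))) := by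
    rw [n1, Category.assoc, IsIso.hom_inv_id, Category.comp_id]
  have e2 : γ₂.app (MC.weq.Q.obj A)
      = ((RGaux MC MD G hGtf).map (MC.weq.Q.map (ι MC A)) ≫
          γ₂.app (MC.weq.Q.obj (Zo MC A))) ≫ inv (H.map (MC.weq.Q.map (ι MC A))) := by
    rw [n2, Category.assoc, IsIso.hom_inv_id, Category.comp_id]
  rw [e1, e2, hZ]

end QuillenAux

/-- **Quillen.** Let `C`, `D` be model categories and `G : C ⥤ D` a right
Quillen functor: `G` has a left adjoint `F` and preserves fibrations and trivial
fibrations. Then `G` admits a right derived functor `RG : Ho(C) ⥤ Ho(D)`: there is a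
functor `RG` together with a natural transformation `η : λ_D ∘ G ⟶ RG ∘ λ_C` (where
`λ_C`, `λ_D` are the localization functors at the weak equivalences) which is universal,
i.e. exhibits `RG` as a left Kan extension of `λ_D ∘ G` along `λ_C` (so that every
natural transformation `λ_D ∘ G ⟶ H ∘ λ_C` factors essentially uniquely through `η`).
Moreover, for every object `A` of `C` and every weak equivalence `A ⟶ Afib` with `Afib`
fibrant, `RG(A)` is isomorphic in `Ho(D)` to `G(Afib)`. -/
theorem rightQuillen_hasRightDerivedFunctor
    {C : Type u} [Category.{v} C] {D : Type u'} [Category.{v'} D]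
    (MC : ModelStructure C) (MD : ModelStructure D) [HasTerminal C]
    (G : C ⥤ D) (F : D ⥤ C) (adj : F ⊣ G)
    (hGfib : ∀ ⦃X Y : C⦄ (p : X ⟶ Y), MC.fib p → MD.fib (G.map p))
    (hGtrivfib : ∀ ⦃X Y : C⦄ (p : X ⟶ Y), MC.fib p → MC.weq p →
        MD.fib (G.map p) ∧ MD.weq (G.map p)) :
    ∃ (RG : MC.weq.Localization ⥤ MD.weq.Localization)
      (η : G ⋙ MD.weq.Q ⟶ MC.weq.Q ⋙ RG),
        RG.IsLeftKanExtension η ∧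
        ∀ (A Afib : C) (i : A ⟶ Afib), MC.weq i → MC.fib (terminal.from Afib) →
          Nonempty (RG.obj (MC.weq.Q.obj A) ≅ MD.weq.Q.obj (G.obj Afib)) := by
  refine ⟨QuillenAux.RGaux MC MD G hGtrivfib, QuillenAux.ηnat MC MD G hGtrivfib, ?_, ?_⟩
  · refine ⟨⟨IsInitial.ofUniqueHom (fun E => StructuredArrow.homMk
      (Localization.liftNatTrans MC.weq.Q MC.weq (QuillenAux.Phi MC MD G hGtrivfib)
        (MC.weq.Q ⋙ E.right) (QuillenAux.RGaux MC MD G hGtrivfib) E.right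
        (QuillenAux.σnat MC MD G hGtrivfib E.right E.hom)) ?_) ?_⟩⟩
    · ext A
      exact QuillenAux.η_desc_fac MC MD G hGtrivfib E.right E.hom A
    · intro E m
      apply StructuredArrow.hom_ext
      apply QuillenAux.γ_uniq MC MD G hGtrivfib E.right E.hom
      · intro A
        have h := NatTrans.congr_app (StructuredArrow.w m) A
        exact h
      · intro A
        exact QuillenAux.η_desc_fac MC MD G hGtrivfib E.right E.hom A
  · intro A Afib i hw hfib
    haveI := MC.cm2
    haveI := MC.cm4a (QuillenAux.ι MC A) (terminal.from Afib)
      (QuillenAux.cof_ι MC A) (QuillenAux.weq_ι MC A) hfib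
    have sq : CommSq i (QuillenAux.ι MC A) (terminal.from Afib)
        (terminal.from (QuillenAux.Zo MC A)) := ⟨terminal.hom_ext _ _⟩
    have hk : MC.weq sq.lift :=
      MC.weq.of_precomp (QuillenAux.ι MC A) _ (QuillenAux.weq_ι MC A)
        (by rw [sq.fac_left]; exact hw)
    haveI := QuillenAux.kenBrown MC MD G hGtrivfib sq.lift hk
      (QuillenAux.fib_Zo MC A) hfib
    exact ⟨(QuillenAux.facIso MC MD G hGtrivfib).app A ≪≫
      @asIso _ _ _ _ (MD.weq.Q.map (G.map sq.lift)) this⟩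
end

section
/- Let f : A → B be a surjective homomorphism of commutative rings whose kernel I satisfies I² = 0, so that I carries a natural B-module structure (with f(a)·x = a·x for a ∈ A, x ∈ I, well defined since I² = 0). Let B ⊕ I denote the trivial square-zero extension of B by I, the commutative ring with underlying set B × I and multiplication (b, x)(b', x') = (bb', bx' + b'x). Then the map (a, a') ↦ (a, (f(a), a − a')) defines an isomorphism of commutative rings from the fibre product A ×_B A = {(a, a') ∈ A × A : f(a) = f(a')} onto the fibre product A ×_B (B ⊕ I) = {(a, (b, x)) ∈ A × (B ⊕ I) : f(a) = b}. -/
/-!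
STATEMENT 3: for a square-zero extension `f : A ↠ B` with kernel `I`, the fibre product
`A ×_B A` is isomorphic as a ring to `A ×_B (B ⊕ I)`, where `B ⊕ I` is the trivial
square-zero extension, via `(a, a') ↦ (a, (f a, a − a'))`.
-/

open Function
open scoped RightActions

universe u v

theorem fibreProduct_squareZeroExtension_iso
    {A : Type u} {B : Type v} [CommRing A] [CommRing B]
    (f : A →+* B) (hf : Function.Surjective f)
    (hsq : ∀ x y : A, x ∈ RingHom.ker f → y ∈ RingHom.ker f → x * y = 0)
    -- the natural `B`-module structure on `I = ker f`, with `f a • x = a • x`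
    -- (well defined since `I² = 0`):
    [Module B (RingHom.ker f)] [Module Bᵐᵒᵖ (RingHom.ker f)]
    [IsCentralScalar B (RingHom.ker f)]
    (hsmul : ∀ (a : A) (x : RingHom.ker f),
      ((f a • x : RingHom.ker f) : A) = a * (x : A)) :
    ∃ e : (RingHom.eqLocus (f.comp (RingHom.fst A A)) (f.comp (RingHom.snd A A))) ≃+*
        (RingHom.eqLocus
          (f.comp (RingHom.fst A (TrivSqZeroExt B (RingHom.ker f))))
          ((TrivSqZeroExt.fstHom B B (RingHom.ker f)).toRingHom.comp
            (RingHom.snd A (TrivSqZeroExt B (RingHom.ker f))))),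
      ∀ p : (RingHom.eqLocus (f.comp (RingHom.fst A A)) (f.comp (RingHom.snd A A))),
        ((e p : A × TrivSqZeroExt B (RingHom.ker f)).1 = (p : A × A).1) ∧
        (((e p : A × TrivSqZeroExt B (RingHom.ker f)).2.fst : B) = f ((p : A × A).1)) ∧
        ((((e p : A × TrivSqZeroExt B (RingHom.ker f)).2.snd : RingHom.ker f) : A) =
          (p : A × A).1 - (p : A × A).2) := by
  have hker : ∀ a a' : A, f a = f a' → a - a' ∈ RingHom.ker f := fun a a' h => by
    simp [RingHom.mem_ker, map_sub, h]
  refine ⟨{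
    toFun := fun p => ⟨(p.1.1,
      ((f p.1.1, ⟨p.1.1 - p.1.2, hker _ _ p.2⟩) : TrivSqZeroExt B (RingHom.ker f))), rfl⟩
    invFun := fun q => ⟨(q.1.1, q.1.1 - ((q.1.2.snd : RingHom.ker f) : A)), by
      have hx : f ((q.1.2.snd : RingHom.ker f) : A) = 0 :=
        RingHom.mem_ker.mp (q.1.2.snd).prop
      show f q.1.1 = f (q.1.1 - _)
      rw [map_sub, hx, sub_zero]⟩
    left_inv := fun p => by
      apply Subtype.ext
      exact Prod.ext rfl (sub_sub_cancel _ _)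
    right_inv := fun q => by
      apply Subtype.ext
      refine Prod.ext rfl (TrivSqZeroExt.ext ?_ ?_)
      · exact q.2
      · exact Subtype.ext (sub_sub_cancel _ _)
    map_mul' := fun p q => by
      apply Subtype.ext
      refine Prod.ext rfl (TrivSqZeroExt.ext (map_mul f _ _) (Subtype.ext ?_))
      show p.1.1 * q.1.1 - p.1.2 * q.1.2 =
        (((f p.1.1 •> (⟨q.1.1 - q.1.2, hker _ _ q.2⟩ : RingHom.ker f) +
          (⟨p.1.1 - p.1.2, hker _ _ p.2⟩ : RingHom.ker f) <• f q.1.1) : RingHom.ker f) : A)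
      push_cast
      rw [show ((⟨p.1.1 - p.1.2, hker _ _ p.2⟩ : RingHom.ker f) <• f q.1.1) =
          f q.1.1 • (⟨p.1.1 - p.1.2, hker _ _ p.2⟩ : RingHom.ker f) from
          (op_smul_eq_smul _ _), hsmul, hsmul]
      have h0 : (p.1.1 - p.1.2) * (q.1.1 - q.1.2) = 0 :=
        hsq _ _ (hker _ _ p.2) (hker _ _ q.2)
      linear_combination -h0
    map_add' := fun p q => by
      apply Subtype.ext
      refine Prod.ext rfl (TrivSqZeroExt.ext (map_add f _ _) (Subtype.ext ?_))
      show p.1.1 + q.1.1 - (p.1.2 + q.1.2) = (p.1.1 - p.1.2) + (q.1.1 - q.1.2)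
      ring }, fun p => ⟨rfl, rfl, rfl⟩⟩
end

section
/- Let R be a Noetherian commutative ring, I ⊆ R an ideal, and C a chain complex of R-modules indexed by the natural numbers such that every term C_n is a finitely generated R-module and every homology module H_n(C) is annihilated by I. Then the canonical chain map from C to its levelwise I-adic completion Ĉ (where Ĉ_n = lim_k C_n/I^k C_n, with the induced differentials) is a quasi-isomorphism, i.e. it induces an isomorphism H_n(C) → H_n(Ĉ) for every n. -/
/-!
STATEMENT 4: for a Noetherian ring `R`, an ideal `I` and a chain complex `C` of finitely
generated `R`-modules whose homology is annihilated by `I`, the canonical map from `C`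
to its levelwise `I`-adic completion is a quasi-isomorphism.
-/

open CategoryTheory

universe u

variable {R : Type u} [CommRing R] (I : Ideal R)

/-- The levelwise `I`-adic completion of a chain complex of `R`-modules, with the induced
differentials. -/
noncomputable def adicCompletionComplex (C : ChainComplex (ModuleCat.{u} R) ℕ) :
    ChainComplex (ModuleCat.{u} R) ℕ where
  X n := ModuleCat.of R (AdicCompletion I (C.X n))
  d i j := ModuleCat.ofHom ((AdicCompletion.map I ((C.d i j).hom : C.X i →ₗ[R] C.X j)).restrictScalars R :
    AdicCompletion I (C.X i) →ₗ[R] AdicCompletion I (C.X j))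
  shape i j h := by
    have h0 : ((C.d i j).hom : C.X i →ₗ[R] C.X j) = 0 := by rw [C.shape i j h]; rfl
    refine ModuleCat.hom_ext (LinearMap.ext (fun x => ?_))
    show AdicCompletion.map I (C.d i j).hom x = 0
    rw [h0, AdicCompletion.map_zero]
    rfl
  d_comp_d' i j k _ _ := by
    have h : ((C.d j k).hom : C.X j →ₗ[R] C.X k) ∘ₗ ((C.d i j).hom : C.X i →ₗ[R] C.X j) = 0 := by
      ext x
      exact congrArg (fun f => ModuleCat.Hom.hom f x) (C.d_comp_d i j k)
    refine ModuleCat.hom_ext (LinearMap.ext (fun x => ?_))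
    show AdicCompletion.map I (C.d j k).hom (AdicCompletion.map I (C.d i j).hom x) = 0
    rw [AdicCompletion.map_comp_apply, h, AdicCompletion.map_zero]
    rfl

/-- The canonical chain map from a chain complex of `R`-modules to its levelwise `I`-adic
completion. -/
noncomputable def toAdicCompletionComplex (C : ChainComplex (ModuleCat.{u} R) ℕ) :
    C ⟶ adicCompletionComplex I C where
  f n := ModuleCat.ofHom (AdicCompletion.of I (C.X n) : C.X n →ₗ[R] AdicCompletion I (C.X n))
  comm' i j _ := by
    refine ModuleCat.hom_ext (LinearMap.ext (fun x => ?_))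
    rfl


section AuxLemmas

open AdicCompletion

variable {M N P : Type u} [AddCommGroup M] [Module R M] [AddCommGroup N] [Module R N]
  [AddCommGroup P] [Module R P]

lemma aux_map_of (f : M →ₗ[R] N) (x : M) :
    AdicCompletion.map I f (AdicCompletion.of I M x) = AdicCompletion.of I N (f x) := rfl

lemma aux_map_exact [IsNoetherianRing R] [Module.Finite R N] [Module.Finite R P]
    (f : M →ₗ[R] N) (g : N →ₗ[R] P) (h : Function.Exact f g) :
    Function.Exact (AdicCompletion.map I f) (AdicCompletion.map I g) := by
  have hker : LinearMap.ker g = LinearMap.range f := LinearMap.exact_iff.mp h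
  have hgdec : (LinearMap.range g).subtype ∘ₗ g.rangeRestrict = g :=
    LinearMap.subtype_comp_codRestrict _ _ _
  have hfdec : (LinearMap.range f).subtype ∘ₗ f.rangeRestrict = f :=
    LinearMap.subtype_comp_codRestrict _ _ _
  have hex : Function.Exact (LinearMap.range f).subtype g.rangeRestrict := by
    rw [LinearMap.exact_iff, LinearMap.ker_rangeRestrict, hker, Submodule.range_subtype]
  have E1 : Function.Exact (AdicCompletion.map I (LinearMap.range f).subtype)
      (AdicCompletion.map I g.rangeRestrict) :=
    AdicCompletion.map_exact (Submodule.injective_subtype _) hex g.surjective_rangeRestrict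
  intro y
  constructor
  · intro hy
    have h1 : AdicCompletion.map I (LinearMap.range g).subtype
        (AdicCompletion.map I g.rangeRestrict y) = 0 := by
      rw [AdicCompletion.map_comp_apply, hgdec]
      exact hy
    have h2 : AdicCompletion.map I g.rangeRestrict y = 0 :=
      AdicCompletion.map_injective I (Submodule.injective_subtype _)
        (by rw [h1]; exact (LinearMap.map_zero _).symm)
    obtain ⟨w, hw⟩ := (E1 y).mp h2
    obtain ⟨x, hx⟩ := AdicCompletion.map_surjective I f.surjective_rangeRestrict w
    refine ⟨x, ?_⟩
    rw [← hfdec, ← AdicCompletion.map_comp_apply, hx, hw]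
  · rintro ⟨x, rfl⟩
    rw [AdicCompletion.map_comp_apply, h.linearMap_comp_eq_zero, AdicCompletion.map_zero]
    rfl

lemma aux_of_bijective (h : ∀ r ∈ I, ∀ x : M, r • x = 0) :
    Function.Bijective (AdicCompletion.of I M) := by
  have hbot : (I • (⊤ : Submodule R M)) = ⊥ := by
    rw [eq_bot_iff]
    intro x hx
    refine Submodule.smul_induction_on hx (fun r hr m _ => ?_) (fun x y hx hy => ?_)
    · simp [h r hr m]
    · simpa using add_mem hx hy
  have hpow : ∀ k : ℕ, k ≠ 0 → (I ^ k • (⊤ : Submodule R M)) = ⊥ := fun k hk =>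
    le_bot_iff.mp (le_trans (Submodule.smul_mono_left (Ideal.pow_le_self hk)) hbot.le)
  constructor
  · intro a b hab
    have h1 : (AdicCompletion.of I M a).val 1 = (AdicCompletion.of I M b).val 1 := by rw [hab]
    rw [AdicCompletion.of_apply, AdicCompletion.of_apply, Submodule.mkQ_apply,
      Submodule.mkQ_apply, Submodule.Quotient.eq, hpow 1 one_ne_zero] at h1
    simpa [sub_eq_zero] using h1
  · intro y
    obtain ⟨x, hx⟩ := Submodule.Quotient.mk_surjective _ (y.val 1)
    refine ⟨x, AdicCompletion.ext fun k => ?_⟩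
    match k with
    | 0 =>
      obtain ⟨z, hz⟩ := Submodule.Quotient.mk_surjective _ (y.val 0)
      rw [AdicCompletion.of_apply, Submodule.mkQ_apply, ← hz, Submodule.Quotient.eq]
      simp [Ideal.one_eq_top, Submodule.top_smul]
    | (k+1) =>
      obtain ⟨z, hz⟩ := Submodule.Quotient.mk_surjective _ (y.val (k+1))
      have ht := AdicCompletion.transitionMap_comp_eval_apply I M
        (show 1 ≤ k+1 by omega) y
      have tmk : AdicCompletion.transitionMap I M (show 1 ≤ k+1 by omega)
          (Submodule.Quotient.mk z) = Submodule.Quotient.mk z := rfl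
      rw [← hz, tmk, ← hx] at ht
      have hzx : z = x := by
        rw [Submodule.Quotient.eq, hpow 1 one_ne_zero] at ht
        simpa [sub_eq_zero] using ht
      rw [AdicCompletion.of_apply, Submodule.mkQ_apply, ← hz, hzx]

end AuxLemmas

section CoreLemma

set_option linter.unusedSectionVars false

variable [IsNoetherianRing R]
variable {M₁ M₂ M₃ : Type u} [AddCommGroup M₁] [Module R M₁] [AddCommGroup M₂] [Module R M₂]
  [AddCommGroup M₃] [Module R M₃] [Module.Finite R M₁] [Module.Finite R M₂] [Module.Finite R M₃]
variable (d₁ : M₁ →ₗ[R] M₂) (d₂ : M₂ →ₗ[R] M₃)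

lemma core_bijective
    (T₁ : M₁ →ₗ[R] LinearMap.ker d₂) (hT₁ : ∀ x, (T₁ x : M₂) = d₁ x)
    (T₂ : AdicCompletion I M₁ →ₗ[R]
      LinearMap.ker ((AdicCompletion.map I d₂).restrictScalars R))
    (hT₂ : ∀ x, (T₂ x : AdicCompletion I M₂) = AdicCompletion.map I d₁ x)
    (hI : ∀ r ∈ I, ∀ x : (LinearMap.ker d₂ ⧸ LinearMap.range T₁), r • x = 0)
    (φK : LinearMap.ker d₂ →ₗ[R] LinearMap.ker ((AdicCompletion.map I d₂).restrictScalars R))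
    (hφK : ∀ x : LinearMap.ker d₂, (φK x : AdicCompletion I M₂) = AdicCompletion.of I M₂ (x : M₂))
    (φH : (LinearMap.ker d₂ ⧸ LinearMap.range T₁) →ₗ[R]
      (LinearMap.ker ((AdicCompletion.map I d₂).restrictScalars R) ⧸ LinearMap.range T₂))
    (hφH : ∀ z : LinearMap.ker d₂,
      φH (Submodule.Quotient.mk z) = Submodule.Quotient.mk (φK z)) :
    Function.Bijective φH := by
  haveI : Module.Finite R (LinearMap.ker d₂) := inferInstance
  haveI : Module.Finite R (LinearMap.ker d₂ ⧸ LinearMap.range T₁) := inferInstance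
  have hd₁ : d₁ = (LinearMap.ker d₂).subtype ∘ₗ T₁ := by
    ext x
    simp only [LinearMap.comp_apply, Submodule.subtype_apply]
    exact (hT₁ x).symm
  have exact₁ : Function.Exact (AdicCompletion.map I (LinearMap.ker d₂).subtype)
      (AdicCompletion.map I d₂) :=
    aux_map_exact I _ _ (LinearMap.exact_subtype_ker_map d₂)
  have injS : Function.Injective (AdicCompletion.map I (LinearMap.ker d₂).subtype) :=
    AdicCompletion.map_injective I (Submodule.injective_subtype _)
  have exactTπ : Function.Exact T₁ (LinearMap.range T₁).mkQ :=
    LinearMap.exact_iff.mpr (Submodule.ker_mkQ _)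
  have exact₂ : Function.Exact (AdicCompletion.map I T₁)
      (AdicCompletion.map I (LinearMap.range T₁).mkQ) :=
    aux_map_exact I _ _ exactTπ
  have bijH : Function.Bijective
      (AdicCompletion.of I (LinearMap.ker d₂ ⧸ LinearMap.range T₁)) := aux_of_bijective I hI
  have hπT : (LinearMap.range T₁).mkQ ∘ₗ T₁ = 0 := by
    ext x
    simp only [LinearMap.comp_apply, Submodule.mkQ_apply, LinearMap.zero_apply,
      Submodule.Quotient.mk_eq_zero]
    exact ⟨x, rfl⟩
  have key_inj : ∀ a, φH a = 0 → a = 0 := by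
    intro a ha
    obtain ⟨z, rfl⟩ := Submodule.Quotient.mk_surjective _ a
    rw [hφH, Submodule.Quotient.mk_eq_zero] at ha
    obtain ⟨u, hu⟩ := ha
    have h1 : AdicCompletion.map I d₁ u = AdicCompletion.of I M₂ (z : M₂) := by
      rw [← hT₂, hu, hφK]
    have h2 : AdicCompletion.map I (LinearMap.ker d₂).subtype (AdicCompletion.map I T₁ u)
        = AdicCompletion.map I (LinearMap.ker d₂).subtype
          (AdicCompletion.of I (LinearMap.ker d₂) z) := by
      rw [AdicCompletion.map_comp_apply, ← hd₁, aux_map_of]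
      exact h1
    have h3 := injS h2
    have h4 : AdicCompletion.of I (LinearMap.ker d₂ ⧸ LinearMap.range T₁)
        (Submodule.Quotient.mk z) = 0 := by
      have h5 := congrArg (AdicCompletion.map I (LinearMap.range T₁).mkQ) h3
      rw [AdicCompletion.map_comp_apply, hπT, AdicCompletion.map_zero, aux_map_of,
        Submodule.mkQ_apply] at h5
      exact h5.symm.trans rfl
    have h5 : (Submodule.Quotient.mk z :
        LinearMap.ker d₂ ⧸ LinearMap.range T₁) = 0 :=
      bijH.injective (by rw [h4]; exact (LinearMap.map_zero _).symm)
    exact h5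
  constructor
  · intro a b hab
    have := key_inj (a - b) (by rw [map_sub, hab, sub_self])
    rwa [sub_eq_zero] at this
  · intro w'
    obtain ⟨w, rfl⟩ := Submodule.Quotient.mk_surjective _ w'
    have hw : AdicCompletion.map I d₂ (w : AdicCompletion I M₂) = 0 := w.2
    obtain ⟨v, hv⟩ := (exact₁ (w : AdicCompletion I M₂)).mp hw
    obtain ⟨h₀, hh₀⟩ := bijH.surjective (AdicCompletion.map I (LinearMap.range T₁).mkQ v)
    obtain ⟨z₀, rfl⟩ := Submodule.Quotient.mk_surjective _ h₀
    have h4 : AdicCompletion.map I (LinearMap.range T₁).mkQ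
        (v - AdicCompletion.of I (LinearMap.ker d₂) z₀) = 0 := by
      rw [map_sub, aux_map_of, Submodule.mkQ_apply, ← hh₀, sub_self]
    obtain ⟨u, hu⟩ := (exact₂ _).mp h4
    have hmap : AdicCompletion.map I d₁ u
        = (w : AdicCompletion I M₂) - AdicCompletion.of I M₂ (z₀ : M₂) := by
      rw [hd₁, ← AdicCompletion.map_comp_apply, hu, map_sub, hv]
      rfl
    refine ⟨Submodule.Quotient.mk z₀, ?_⟩
    rw [hφH, Submodule.Quotient.eq]
    refine ⟨-u, ?_⟩
    apply Subtype.ext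
    rw [Submodule.coe_sub, hφK, hT₂, map_neg, hmap, neg_sub]

end CoreLemma

/-- Let `R` be a Noetherian commutative ring, `I ⊆ R` an ideal, and `C`
a chain complex of `R`-modules (indexed by `ℕ`) such that every term is a finitely
generated `R`-module and every homology module of `C` is annihilated by `I`. Then the
canonical chain map from `C` to its levelwise `I`-adic completion is a
quasi-isomorphism. -/
theorem quasiIso_toAdicCompletionComplex [IsNoetherianRing R]
    (C : ChainComplex (ModuleCat.{u} R) ℕ)
    (hfg : ∀ n : ℕ, Module.Finite R (C.X n))
    (hann : ∀ (n : ℕ) (r : R), r ∈ I → ∀ x : C.homology n, r • x = 0) :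
    QuasiIso (toAdicCompletionComplex I C) := by
  rw [quasiIso_iff]
  intro n
  rw [quasiIsoAt_iff, ShortComplex.quasiIso_iff]
  set ψ := (HomologicalComplex.shortComplexFunctor (ModuleCat.{u} R)
    (ComplexShape.down ℕ) n).map (toAdicCompletionComplex I C) with hψ
  set S₁ := C.sc n with hS₁
  set S₂ := (adicCompletionComplex I C).sc n with hS₂
  haveI : Module.Finite R S₁.X₁ := hfg _
  haveI : Module.Finite R S₁.X₂ := hfg _
  haveI : Module.Finite R S₁.X₃ := hfg _
  -- the maps
  have hres : ∀ x ∈ LinearMap.ker (S₁.g.hom : S₁.X₂ →ₗ[R] S₁.X₃),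
      AdicCompletion.of I (C.X n) x ∈
        LinearMap.ker ((AdicCompletion.map I (S₁.g.hom : S₁.X₂ →ₗ[R] S₁.X₃)).restrictScalars R) := by
    intro x hx
    rw [LinearMap.mem_ker] at hx
    show AdicCompletion.map I (S₁.g.hom : S₁.X₂ →ₗ[R] S₁.X₃) (AdicCompletion.of I (C.X n) x) = 0
    have : AdicCompletion.map I (S₁.g.hom : S₁.X₂ →ₗ[R] S₁.X₃) (AdicCompletion.of I (C.X n) x)
        = AdicCompletion.of I S₁.X₃ (S₁.g x) := rfl
    rw [this, hx, map_zero]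
  let φK : LinearMap.ker (S₁.g.hom : S₁.X₂ →ₗ[R] S₁.X₃) →ₗ[R]
      LinearMap.ker ((AdicCompletion.map I (S₁.g.hom : S₁.X₂ →ₗ[R] S₁.X₃)).restrictScalars R) :=
    LinearMap.restrict (AdicCompletion.of I (C.X n)) hres
  have hcomp : LinearMap.range S₁.moduleCatToCycles ≤
      (LinearMap.range S₂.moduleCatToCycles).comap φK := by
    rintro _ ⟨x, rfl⟩
    exact ⟨AdicCompletion.of I S₁.X₁ x, Subtype.ext rfl⟩
  let φH := Submodule.mapQ _ _ φK hcomp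
  have hann' : ∀ r ∈ I, ∀ x : (LinearMap.ker (S₁.g.hom : S₁.X₂ →ₗ[R] S₁.X₃) ⧸
      LinearMap.range S₁.moduleCatToCycles), r • x = 0 := by
    intro r hr x
    have h0 : r • (S₁.moduleCatHomologyIso.inv x) = 0 := hann n r hr _
    have h1 := congrArg (S₁.moduleCatHomologyIso.hom) h0
    rw [map_smul] at h1
    have hx : S₁.moduleCatHomologyIso.hom (S₁.moduleCatHomologyIso.inv x) = x :=
      Iso.inv_hom_id_apply S₁.moduleCatHomologyIso x
    rw [hx, map_zero] at h1
    exact h1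
  have hbij : Function.Bijective φH :=
    core_bijective I (S₁.f.hom : S₁.X₁ →ₗ[R] S₁.X₂) (S₁.g.hom : S₁.X₂ →ₗ[R] S₁.X₃)
      S₁.moduleCatToCycles (fun x => rfl)
      S₂.moduleCatToCycles (fun x => rfl)
      hann' φK (fun x => rfl) φH (fun z => rfl)
  -- left homology map data
  let γ : ShortComplex.LeftHomologyMapData ψ S₁.moduleCatLeftHomologyData
      S₂.moduleCatLeftHomologyData :=
    { φK := ModuleCat.ofHom φK
      φH := ModuleCat.ofHom φH
      commi := by
        ext x
        rfl
      commf' := by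
        ext x
        exact Subtype.ext rfl
      commπ := by
        ext x
        rfl }
  rw [γ.homologyMap_eq]
  haveI : IsIso γ.φH := by
    rw [ConcreteCategory.isIso_iff_bijective]
    exact hbij
  infer_instance
end

section
/- Let n ≥ 0 and let X be an n-hypergroupoid. Then the unit map X → cosk_{n+1}(X) of the adjunction between (n+1)-truncation and (n+1)-coskeleton is an isomorphism of simplicial sets; in particular X is determined by its simplices in dimensions ≤ n+1. -/
/-!
STATEMENT 7: an `n`-hypergroupoid is `(n+1)`-coskeletal: the unit map
`X ⟶ cosk_{n+1} X` is an isomorphism.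
-/

open CategoryTheory Simplicial SSet

universe u

/-- The partial matching map of a simplicial set `X`: restriction of `m`-simplices
(viewed as maps `Δ[m] ⟶ X`) along the horn inclusion `Λ[m, k] ⊆ Δ[m]`. -/
def partialMatchingMap (X : SSet.{u}) (m : ℕ) (k : Fin (m + 1)) (x : X _⦋m⦌) :
    ((Λ[m, k] : SSet.{u}) ⟶ X) :=
  (SSet.horn.{u} m k).ι ≫ (SSet.yonedaEquiv (X := X) (n := ⦋m⦌)).symm x

/-- A simplicial set `X` is an `n`-hypergroupoid if all partial matching maps
`X_m → Hom(Λ[m,k], X)` (for `m ≥ 1`, `0 ≤ k ≤ m`) are surjective, and those with `m > n`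
are bijective. -/
def IsHypergroupoid (n : ℕ) (X : SSet.{u}) : Prop :=
  (∀ (m : ℕ) (k : Fin (m + 2)), Function.Surjective (partialMatchingMap X (m + 1) k)) ∧
  (∀ (m : ℕ) (k : Fin (m + 2)), n < m + 1 →
    Function.Bijective (partialMatchingMap X (m + 1) k))

open Opposite SimplexCategory

variable {n : ℕ} {X : SSet.{u}}

lemma faceInj (hX : IsHypergroupoid n X) (m : ℕ) (hm : n < m + 1)
    (x x' : X _⦋m+1⦌) (h : ∀ i : Fin (m+2), X.map (δ i).op x = X.map (δ i).op x') :
    x = x' := by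
  apply (hX.2 m 0 hm).1
  apply horn.hom_ext
  intro j hj
  show X.map (δ j).op x = X.map (δ j).op x'
  exact h j

/-- Sphere compatibility for a family `y : Fin (m+3) → X _[m+1]`. -/
def SphereCompat (X : SSet.{u}) (m : ℕ) (y : Fin (m+3) → X _⦋m+1⦌) : Prop :=
  ∀ (a b : Fin (m+2)), a ≤ b →
    X.map (δ b).op (y a.castSucc) = X.map (δ a).op (y b.succ)

lemma sphereCompat_W {m : ℕ} {y : Fin (m+3) → X _⦋m+1⦌} (hy : SphereCompat X m y) :
    ∀ {Δ' : SimplexCategory} (u u' : Δ' ⟶ ⦋m+1⦌) (l l' : Fin (m+3)),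
      u ≫ δ l = u' ≫ δ l' → X.map u.op (y l) = X.map u'.op (y l') := by
  -- first prove it assuming l ≤ l'
  suffices H : ∀ {Δ' : SimplexCategory} (u u' : Δ' ⟶ ⦋m+1⦌) (l l' : Fin (m+3)), l ≤ l' →
      u ≫ δ l = u' ≫ δ l' → X.map u.op (y l) = X.map u'.op (y l') by
    intro Δ' u u' l l' h
    rcases le_total l l' with hl | hl
    · exact H u u' l l' hl h
    · exact (H u' u l' l hl h.symm).symm
  intro Δ' u u' l l' hll h
  rcases eq_or_lt_of_le hll with rfl | hlt
  · obtain rfl : u = u' := by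
      rwa [cancel_mono] at h
    rfl
  · have hl'0 : l' ≠ 0 := fun h0 => (Fin.not_lt_zero l (h0 ▸ hlt)).elim
    have hllast : l ≠ Fin.last _ := (hlt.trans_le (Fin.le_last _)).ne
    set a : Fin (m+2) := l.castPred hllast with ha
    set b : Fin (m+2) := l'.pred hl'0 with hb
    have hab : a ≤ b := by
      simp only [ha, hb, Fin.le_def, Fin.coe_castPred, Fin.coe_pred]
      have := Fin.lt_def.mp hlt
      omega
    have hl : l = a.castSucc := (Fin.castSucc_castPred _ _).symm
    have hl' : l' = b.succ := (Fin.succ_pred _ _).symm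
    -- u misses b, u' misses a
    have hu : ∀ t, u.toOrderHom t ≠ b := by
      intro t ht
      have : (u ≫ δ l).toOrderHom t = l' := by
        simp only [comp_toOrderHom, OrderHom.comp_coe, Function.comp_apply, ht]
        show l.succAbove b = l'
        rw [Fin.succAbove_of_le_castSucc _ _ (by rw [hl]; exact Fin.castSucc_le_castSucc_iff.2 hab), hl']
      rw [h] at this
      have : l'.succAbove (u'.toOrderHom t) = l' := this
      exact Fin.succAbove_ne _ _ this
    have hu' : ∀ t, u'.toOrderHom t ≠ a := by
      intro t ht
      have : (u' ≫ δ l').toOrderHom t = l := by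
        simp only [comp_toOrderHom, OrderHom.comp_coe, Function.comp_apply, ht]
        show l'.succAbove a = l
        rw [Fin.succAbove_of_castSucc_lt _ _ (by rw [← hl]; exact hlt), ← hl]
      rw [← h] at this
      have : l.succAbove (u.toOrderHom t) = l := this
      exact Fin.succAbove_ne _ _ this
    obtain ⟨v, hv⟩ := eq_comp_δ_of_not_surjective' u b hu
    obtain ⟨v', hv'⟩ := eq_comp_δ_of_not_surjective' u' a hu'
    have hδ : δ a ≫ δ l' = δ b ≫ δ l := by
      rw [hl, hl']; exact δ_comp_δ hab
    have hvv : v = v' := by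
      have h2 : v ≫ (δ b ≫ δ l) = v' ≫ (δ b ≫ δ l) := by
        rw [← Category.assoc, ← hv, h, hv', Category.assoc, hδ]
      rwa [cancel_mono] at h2
    have hcomp := hy a b hab
    rw [← hl, ← hl'] at hcomp
    rw [hv, hv', hvv, op_comp, op_comp, FunctorToTypes.map_comp_apply,
      FunctorToTypes.map_comp_apply, hcomp]

section HornMap
variable {m : ℕ} {y : Fin (m+3) → X _⦋m+1⦌}

/-- Factorization data for a non-surjective map into `[m+2]`. -/
def FactorData {Δ' : SimplexCategory} (f : Δ' ⟶ ⦋m+2⦌) : Prop :=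
  ∃ p : Fin (m+3) × (Δ' ⟶ ⦋m+1⦌), f = p.2 ≫ δ p.1

lemma factorData_of_horn {k : Fin (m+3)} {Δ' : SimplexCategoryᵒᵖ} (f : Λ[m+2,k].obj Δ') :
    FactorData (stdSimplex.objEquiv f.1) := by
  obtain ⟨f, hf⟩ := f
  have : ∃ l, l ∉ Set.range (stdSimplex.asOrderHom f) ∪ {k} := by
    by_contra hc
    push_neg at hc
    exact hf (Set.eq_univ_of_forall hc)
  obtain ⟨l, hl⟩ := this
  simp only [Set.mem_union, Set.mem_singleton_iff, not_or] at hl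
  obtain ⟨θ', hθ'⟩ := eq_comp_δ_of_not_surjective' (stdSimplex.objEquiv f) l
    (fun t ht => hl.1 ⟨t, ht⟩)
  exact ⟨⟨l, θ'⟩, hθ'⟩

open Classical in
/-- The value of the horn map built from a sphere. -/
noncomputable def sphereApp {Δ' : SimplexCategory} (f : Δ' ⟶ ⦋m+2⦌) (hf : FactorData f) :
    X.obj (op Δ') :=
  X.map hf.choose.2.op (y hf.choose.1)

lemma sphereApp_eq (hy : SphereCompat X m y) {Δ' : SimplexCategory} (f : Δ' ⟶ ⦋m+2⦌) (hf : FactorData f)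
    (l : Fin (m+3)) (v : Δ' ⟶ ⦋m+1⦌) (h : f = v ≫ δ l) :
    sphereApp (y := y) f hf = X.map v.op (y l) := by
  apply sphereCompat_W hy
  rw [← hf.choose_spec, ← h]

/-- The horn map built from a sphere. -/
noncomputable def sphereHornMap (hy : SphereCompat X m y) (k : Fin (m+3)) : (Λ[m+2, k] : SSet.{u}) ⟶ X where
  app Δ' := TypeCat.ofHom fun f => sphereApp (y := y) (stdSimplex.objEquiv f.1) (factorData_of_horn f)
  naturality Δ₁ Δ₂ g := by
    ext f
    obtain ⟨⟨l, v⟩, hv⟩ := factorData_of_horn (k := k) f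
    have h1 : sphereApp (y := y) (stdSimplex.objEquiv f.1)
        (factorData_of_horn f) = X.map v.op (y l) := sphereApp_eq hy _ _ l v hv
    have h2 : stdSimplex.objEquiv (((Λ[m+2,k] : SSet.{u}).map g f).1)
        = (g.unop ≫ v) ≫ δ l := by
      show g.unop ≫ stdSimplex.objEquiv f.1 = _
      rw [hv, Category.assoc]
    show sphereApp (y := y) _ (factorData_of_horn ((Λ[m+2,k] : SSet.{u}).map g f))
      = X.map g (sphereApp (y := y) _ (factorData_of_horn f))
    rw [h1, sphereApp_eq hy _ _ l (g.unop ≫ v) h2, op_comp, FunctorToTypes.map_comp_apply]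
    rfl

lemma sphereHornMap_face (hy : SphereCompat X m y) (k : Fin (m+3)) (j : Fin (m+3)) (hj : j ≠ k) :
    (sphereHornMap hy k).app (op (⦋m+1⦌ : SimplexCategory)) (horn.face k j hj) = y j := by
  show sphereApp (y := y) _ (factorData_of_horn _) = y j
  have : (stdSimplex.objEquiv (horn.face.{u} k j hj).1) = 𝟙 (⦋m+1⦌ : SimplexCategory) ≫ δ j := by
    simp only [Category.id_comp]
    rfl
  refine (sphereApp_eq hy _ (factorData_of_horn _) j (𝟙 _) this).trans ?_
  rw [op_id]
  exact FunctorToTypes.map_id_apply X _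

end HornMap

lemma sphereFill (hX : IsHypergroupoid n X) (m : ℕ) (hm : n < m + 1)
    {y : Fin (m+3) → X _⦋m+1⦌} (hy : SphereCompat X m y) :
    ∃ x : X _⦋m+2⦌, ∀ i, X.map (δ i).op x = y i := by
  obtain ⟨x, hx⟩ := hX.1 (m+1) 0 (sphereHornMap hy 0)
  have hface : ∀ (j : Fin (m+3)) (hj : j ≠ 0), X.map (δ j).op x = y j := by
    intro j hj
    have := ConcreteCategory.congr_hom (congr_app hx (op (⦋m+1⦌ : SimplexCategory))) (horn.face 0 j hj)
    rw [sphereHornMap_face hy 0 j hj] at this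
    exact this
  refine ⟨x, fun i => ?_⟩
  rcases eq_or_ne i 0 with rfl | hi
  · -- the remaining face
    apply faceInj hX m hm
    intro t
    have hδ : (δ t ≫ δ (0 : Fin (m+3))) = δ (0 : Fin (m+2)) ≫ δ t.succ := by
      have := δ_comp_δ (i := (0 : Fin (m+2))) (j := t) (Fin.zero_le t)
      rw [Fin.castSucc_zero] at this
      exact this.symm
    calc X.map (δ t).op (X.map (δ (0 : Fin (m+3))).op x)
        = X.map (δ t ≫ δ (0 : Fin (m+3))).op x := by
          rw [op_comp, FunctorToTypes.map_comp_apply]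
      _ = X.map (δ (0 : Fin (m+2)) ≫ δ t.succ).op x := by rw [hδ]
      _ = X.map (δ (0 : Fin (m+2))).op (X.map (δ t.succ).op x) := by
          rw [op_comp, FunctorToTypes.map_comp_apply]
      _ = X.map (δ (0 : Fin (m+2))).op (y t.succ) := by
          rw [hface t.succ (Fin.succ_ne_zero t)]
      _ = X.map (δ t).op (y 0) := by
          have := hy 0 t (Fin.zero_le t)
          rw [Fin.castSucc_zero] at this
          exact this.symm
  · exact hface i hi

/-- A compatible family on the `(n+1)`-truncation, over `[m]`. -/
def IsFamily (n : ℕ) (X : SSet.{u}) (m : ℕ)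
    (F : ∀ (j : SimplexCategory.Truncated (n+1)), (j.obj ⟶ ⦋m⦌) → X.obj (op j.obj)) : Prop :=
  ∀ (j j' : SimplexCategory.Truncated (n+1)) (f : j.obj ⟶ ⦋m⦌) (g : j'.obj ⟶ j.obj),
    F j' (g ≫ f) = X.map g.op (F j f)

lemma extUniq (hX : IsHypergroupoid n X) : ∀ (m : ℕ)
    (F : ∀ (j : SimplexCategory.Truncated (n+1)), (j.obj ⟶ ⦋m⦌) → X.obj (op j.obj)),
    IsFamily n X m F → ∃! x : X _⦋m⦌, ∀ j f, F j f = X.map f.op x := by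
  intro m
  induction m using Nat.strong_induction_on with
  | _ m IH =>
  intro F hF
  rcases le_or_gt m (n+1) with hm | hm
  · -- `m` is in the truncated range
    refine ⟨F ⟨⦋m⦌, by simpa using hm⟩ (𝟙 _), fun j f => ?_, fun x' hx' => ?_⟩
    · have := hF ⟨⦋m⦌, by simpa using hm⟩ j (𝟙 _) f
      rwa [Category.comp_id] at this
    · have := hx' ⟨⦋m⦌, by simpa using hm⟩ (𝟙 _)
      rw [op_id, FunctorToTypes.map_id_apply] at this
      exact this.symm
  · obtain ⟨M, rfl⟩ : ∃ M, m = M + 2 := ⟨m - 2, by omega⟩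
    have famInj : ∀ (L : ℕ), L < M + 2 → ∀ (a b : X _⦋L⦌),
        (∀ (j : SimplexCategory.Truncated (n+1)) (f : j.obj ⟶ ⦋L⦌),
          X.map f.op a = X.map f.op b) → a = b := by
      intro L hL a b hab
      have h1 := IH L hL (fun j f => X.map f.op a)
        (fun j j' f g => by
          show X.map (g ≫ f).op a = X.map g.op (X.map f.op a)
          rw [op_comp, FunctorToTypes.map_comp_apply])
      exact h1.unique (fun j f => rfl) (fun j f => hab j f)
    have hys : ∀ i : Fin (M+3), ∃! z : X _⦋M+1⦌, ∀ j f, F j (f ≫ δ i) = X.map f.op z := by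
      intro i
      refine IH (M+1) (by omega) (fun j f => F j (f ≫ δ i)) ?_
      intro j j' f g
      show F j' ((g ≫ f) ≫ δ i) = X.map g.op (F j (f ≫ δ i))
      rw [Category.assoc]
      exact hF j j' (f ≫ δ i) g
    set y : Fin (M+3) → X _⦋M+1⦌ := fun i => (hys i).choose with hy_def
    have hy : ∀ (i : Fin (M+3)) j f, F j (f ≫ δ i) = X.map f.op (y i) :=
      fun i => (hys i).choose_spec.1
    have hcompat : SphereCompat X M y := by
      intro a b hab
      apply famInj M (by omega)
      intro j f
      rw [← FunctorToTypes.map_comp_apply, ← op_comp, ← hy a.castSucc j (f ≫ δ b),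
        ← FunctorToTypes.map_comp_apply, ← op_comp, ← hy b.succ j (f ≫ δ a),
        Category.assoc, Category.assoc, δ_comp_δ hab]
    obtain ⟨x, hx⟩ := sphereFill hX M (by omega) hcompat
    have hprop : ∀ j f, F j f = X.map f.op x := by
      intro j f
      have hns : ¬ Function.Surjective f.toOrderHom := by
        intro hs
        have hc := Fintype.card_le_of_surjective _ hs
        simp only [SimplexCategory.len_mk, Fintype.card_fin] at hc
        have hj := j.2
        omega
      obtain ⟨i, θ, hθ⟩ := eq_comp_δ_of_not_surjective f hns
      rw [hθ, op_comp, FunctorToTypes.map_comp_apply, hx i, ← hy i j θ]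
    refine ⟨x, hprop, fun x' hx' => ?_⟩
    apply faceInj hX (M+1) (by omega)
    intro i
    apply famInj (M+1) (by omega)
    intro j f
    rw [← FunctorToTypes.map_comp_apply, ← op_comp, ← hx' j (f ≫ δ i),
      ← FunctorToTypes.map_comp_apply, ← op_comp, ← hprop j (f ≫ δ i)]

open CategoryTheory.Functor in
/-- The structured arrow attached to a map from a truncated simplex. -/
@[simp]
def arr {n m : ℕ} (j : SimplexCategory.Truncated (n+1)) (f : j.obj ⟶ ⦋m⦌) :
    StructuredArrow (op (⦋m⦌ : SimplexCategory)) (SimplexCategory.Truncated.inclusion (n+1)).op :=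
  StructuredArrow.mk (Y := op j) (f.op)

open CategoryTheory.Functor Limits in
lemma cone_isFamily {m : ℕ}
    (s : Limits.Cone (StructuredArrow.proj (op (⦋m⦌ : SimplexCategory))
      (SimplexCategory.Truncated.inclusion (n+1)).op ⋙
      ((SimplexCategory.Truncated.inclusion (n+1)).op ⋙ X))) (p : s.pt) :
    IsFamily n X m (fun j f => s.π.app (arr j f) p) := by
  intro j j' f g
  have w : (arr j f).hom ≫ (SimplexCategory.Truncated.inclusion (n+1)).op.map
      (((ObjectProperty.homMk g).op : op j ⟶ op j')) = (arr j' (g ≫ f)).hom := rfl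
  exact (ConcreteCategory.congr_hom (s.w (StructuredArrow.homMk (f := arr j f) (f' := arr j' (g ≫ f)) ((ObjectProperty.homMk g).op : op j ⟶ op j') w)) p).symm

open CategoryTheory.Functor Limits in
noncomputable def isLimitAt (hX : IsHypergroupoid n X) (m : ℕ) :
    (SimplicialObject.Truncated.rightExtensionInclusion X (n+1)).IsPointwiseRightKanExtensionAt
      (op (⦋m⦌ : SimplexCategory)) where
  lift s := TypeCat.ofHom fun p => (extUniq hX m (fun j f => s.π.app (arr j f) p) (cone_isFamily s p)).choose
  fac s A := by
    ext p
    have hspec := (extUniq hX m (fun j f => s.π.app (arr j f) p)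
      (cone_isFamily s p)).choose_spec.1
    exact (hspec A.right.unop A.hom.unop).symm
  uniq s ℓ hℓ := by
    ext p
    refine ((extUniq hX m (fun j f => s.π.app (arr j f) p) (cone_isFamily s p)).unique ?_
      ((extUniq hX m (fun j f => s.π.app (arr j f) p) (cone_isFamily s p)).choose_spec.1))
    intro j f
    exact (ConcreteCategory.congr_hom (hℓ (arr j f)) p).symm

theorem isIso_coskAdj_unit_of_isHypergroupoid' (n : ℕ) (X : SSet.{u})
    (hX : IsHypergroupoid n X) :
    IsIso ((SSet.coskAdj (n + 1)).unit.app X) := by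
  have key : (SimplicialObject.Truncated.rightExtensionInclusion X
      (n+1)).IsPointwiseRightKanExtension := by
    intro Y
    induction Y using Opposite.rec with | _ Yo =>
    cases Yo with | mk m =>
    exact isLimitAt hX m
  have hc : SimplicialObject.IsCoskeletal X (n+1) := ⟨key.isRightKanExtension⟩
  exact (SimplicialObject.isCoskeletal_iff_isIso X (n+1)).mp hc

/-- If `X` is an `n`-hypergroupoid, then the unit map
`X ⟶ cosk_{n+1} X` of the truncation–coskeleton adjunction is an isomorphism of
simplicial sets; in particular `X` is determined by its simplices of dimension
`≤ n + 1`. -/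
theorem isIso_coskAdj_unit_of_isHypergroupoid (n : ℕ) (X : SSet.{u})
    (hX : IsHypergroupoid n X) :
    IsIso ((SSet.coskAdj (n + 1)).unit.app X) :=
  isIso_coskAdj_unit_of_isHypergroupoid' n X hX
end

section
/- Let X be a 0-hypergroupoid, i.e. a simplicial set such that for every m ≥ 1 and every 0 ≤ k ≤ m the partial matching map X_m → Hom_{sSet}(Λ[m,k], X) is bijective. Then X is isomorphic to the constant simplicial set with value X₀; in particular all face and degeneracy maps of X are bijections. -/
/-!
STATEMENT 9: a 0-hypergroupoid is isomorphic to the constant simplicial set on its set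
of 0-simplices; in particular all face and degeneracy maps are bijections.
-/

open CategoryTheory Simplicial SSet

universe u

lemma horn_inj (X : SSet.{u})
    (hX : ∀ (m : ℕ) (k : Fin (m + 2)), Function.Bijective (partialMatchingMap X (m + 1) k))
    (m : ℕ) (k : Fin (m + 2)) {x x' : X _⦋m + 1⦌}
    (h : ∀ j : Fin (m + 2), j ≠ k → X.δ j x = X.δ j x') : x = x' := by
  apply (hX m k).1
  apply SSet.hom_ext
  intro p
  ext a
  obtain ⟨q⟩ := p
  induction q using SimplexCategory.rec with | _ q =>
  obtain ⟨a, ha⟩ := a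
  set g : ⦋q⦌ ⟶ ⦋m + 1⦌ := SSet.stdSimplex.objEquiv a with hg
  rw [SSet.mem_horn_iff, Set.ne_univ_iff_exists_notMem] at ha
  obtain ⟨j, hj⟩ := ha
  simp only [Set.mem_union, Set.mem_singleton_iff, not_or] at hj
  have hjk : j ≠ k := hj.2
  have hrange : ∀ l : Fin (q + 1), g.toOrderHom l ≠ j := fun l hl => hj.1 ⟨l, hl⟩
  have hfac := SimplexCategory.factor_δ_spec g j hrange
  have key : ∀ y : X _⦋m+1⦌, X.map g.op y
      = X.map (SimplexCategory.factor_δ g j).op (X.δ j y) := by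
    intro y
    conv_lhs => rw [← hfac]
    rw [op_comp, FunctorToTypes.map_comp_apply]
    rfl
  show X.map g.op x = X.map g.op x'
  rw [key, key, h j hjk]

lemma face_surj (X : SSet.{u}) (m : ℕ) (i : Fin (m + 2)) :
    Function.Surjective (X.δ i : X _⦋m + 1⦌ → X _⦋m⦌) := by
  induction i using Fin.lastCases with
  | last =>
    intro y
    refine ⟨X.σ (Fin.last m) y, ?_⟩
    have := congrFun (congrArg (fun f => (ConcreteCategory.hom f : X _⦋m⦌ → X _⦋m⦌)) (X.δ_comp_σ_succ (i := Fin.last m))) y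
    simpa [Fin.succ_last] using this
  | cast i =>
    intro y
    refine ⟨X.σ i y, ?_⟩
    have := congrFun (congrArg (fun f => (ConcreteCategory.hom f : X _⦋m⦌ → X _⦋m⦌)) (X.δ_comp_σ_self (i := i))) y
    simpa using this

/-- two distinct faces of a simplex share a common codimension-2 face -/
lemma faces_commute (X : SSet.{u}) (m : ℕ) (i j : Fin (m + 3)) (hij : i < j) :
    ∃ a b : Fin (m + 2), ∀ z : X _⦋m + 2⦌, X.δ a (X.δ j z) = X.δ b (X.δ i z) := by
  have hj0 : j ≠ 0 := Fin.ne_of_gt (lt_of_le_of_lt (Fin.zero_le _) hij)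
  have hil : i ≠ Fin.last _ := Fin.ne_of_lt (lt_of_lt_of_le hij (Fin.le_last _))
  set u : Fin (m + 2) := i.castPred hil with hu
  set v : Fin (m + 2) := j.pred hj0 with hv
  have huv : u ≤ v := by
    rw [Fin.le_def]
    simp only [hu, hv, Fin.coe_castPred, Fin.coe_pred]
    omega
  refine ⟨u, v, fun z => ?_⟩
  have := congrFun (congrArg (fun f => (ConcreteCategory.hom f : X _⦋m + 2⦌ → X _⦋m⦌)) (X.δ_comp_δ huv)) z
  simp only [types_comp_apply] at this
  rw [hv, hu] at this
  simpa [Fin.succ_pred, Fin.castSucc_castPred] using this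

lemma face_inj (X : SSet.{u})
    (hX : ∀ (m : ℕ) (k : Fin (m + 2)), Function.Bijective (partialMatchingMap X (m + 1) k)) :
    ∀ (m : ℕ) (i : Fin (m + 2)), Function.Injective (X.δ i : X _⦋m + 1⦌ → X _⦋m⦌) := by
  intro m
  induction m with
  | zero =>
    intro i x x' hxx'
    refine horn_inj X hX 0 (i + 1) (fun j hj => ?_)
    have : j = i := by fin_cases i <;> fin_cases j <;> simp_all
    rwa [this]
  | succ m IH =>
    intro i x x' hxx'
    obtain ⟨k, hk⟩ : ∃ k : Fin (m + 3), k ≠ i := by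
      rcases eq_or_ne i 0 with h | h
      · exact ⟨1, by rw [h]; exact one_ne_zero⟩
      · exact ⟨0, Ne.symm h⟩
    refine horn_inj X hX (m + 1) k (fun j hj => ?_)
    rcases eq_or_ne j i with rfl | hji
    · exact hxx'
    · rcases lt_or_gt_of_ne hji with hlt | hgt
      · obtain ⟨a, b, hab⟩ := faces_commute X m j i hlt
        apply IH b
        rw [← hab x, ← hab x', hxx']
      · obtain ⟨a, b, hab⟩ := faces_commute X m i j hgt
        apply IH a
        rw [hab x, hab x', hxx']

lemma sigma_bij (X : SSet.{u})
    (hX : ∀ (m : ℕ) (k : Fin (m + 2)), Function.Bijective (partialMatchingMap X (m + 1) k))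
    (m : ℕ) (i : Fin (m + 1)) :
    Function.Bijective (X.σ i : X _⦋m⦌ → X _⦋m + 1⦌) := by
  have hretr : ∀ y : X _⦋m⦌, X.δ i.castSucc (X.σ i y) = y := fun y => by
    have := congrFun (congrArg (fun f => (ConcreteCategory.hom f : X _⦋m⦌ → X _⦋m⦌)) (X.δ_comp_σ_self (i := i))) y
    simpa using this
  constructor
  · intro y y' h
    rw [← hretr y, ← hretr y', h]
  · intro z
    refine ⟨X.δ i.castSucc z, ?_⟩
    apply face_inj X hX m i.castSucc
    rw [hretr]

/-- the canonical map `X₀ → Xₚ` induced by the unique map `p ⟶ [0]`. -/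
def constMap (X : SSet.{u}) (p : SimplexCategoryᵒᵖ) : X _⦋0⦌ ⟶ X.obj p :=
  X.map (SimplexCategory.const p.unop ⦋0⦌ 0).op

lemma constMap_natural (X : SSet.{u}) {p q : SimplexCategoryᵒᵖ} (f : p ⟶ q) (a : X _⦋0⦌) :
    X.map f (constMap X p a) = constMap X q a := by
  unfold constMap
  rw [← FunctorToTypes.map_comp_apply]
  have h : (SimplexCategory.const p.unop ⦋0⦌ 0).op ≫ f
      = (SimplexCategory.const q.unop ⦋0⦌ 0).op :=
    Quiver.Hom.unop_inj ((SimplexCategory.eq_const_to_zero _).trans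
      (SimplexCategory.eq_const_to_zero _).symm)
  rw [h]

lemma constMap_bij (X : SSet.{u})
    (hX : ∀ (m : ℕ) (k : Fin (m + 2)), Function.Bijective (partialMatchingMap X (m + 1) k))
    (p : SimplexCategoryᵒᵖ) : Function.Bijective (constMap X p) := by
  obtain ⟨q⟩ := p
  induction q using SimplexCategory.rec with | _ q =>
  induction q with
  | zero =>
    have : SimplexCategory.const (⦋0⦌ : SimplexCategory) ⦋0⦌ 0 = 𝟙 _ :=
      (SimplexCategory.eq_const_to_zero _).symm
    show Function.Bijective
      (X.map (SimplexCategory.const (⦋0⦌ : SimplexCategory) ⦋0⦌ 0).op : X _⦋0⦌ → X _⦋0⦌)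
    rw [this, op_id, X.map_id]
    exact Function.bijective_id
  | succ q IHq =>
    have hfac : SimplexCategory.const (⦋q + 1⦌ : SimplexCategory) ⦋0⦌ 0
        = SimplexCategory.σ (0 : Fin (q + 1)) ≫ SimplexCategory.const (⦋q⦌ : SimplexCategory) ⦋0⦌ 0 :=
      SimplexCategory.eq_const_to_zero _
    have : constMap X (Opposite.op ⦋q + 1⦌)
        = constMap X (Opposite.op ⦋q⦌) ≫ X.map (SimplexCategory.σ (0 : Fin (q + 1))).op := by
      show X.map (SimplexCategory.const (⦋q + 1⦌ : SimplexCategory) ⦋0⦌ 0).op = _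
      rw [hfac, op_comp, X.map_comp]
      rfl
    rw [this]
    exact (sigma_bij X hX q 0).comp IHq

noncomputable def constIso (X : SSet.{u})
    (hX : ∀ (m : ℕ) (k : Fin (m + 2)), Function.Bijective (partialMatchingMap X (m + 1) k)) :
    (Functor.const SimplexCategoryᵒᵖ).obj (X _⦋0⦌) ≅ X :=
  NatIso.ofComponents
    (fun p => (Equiv.ofBijective (constMap X p) (constMap_bij X hX p)).toIso)
    (by
      intro p q f
      ext a
      exact (constMap_natural X f a).symm)

/-- Let `X` be a `0`-hypergroupoid, i.e. a simplicial set such that for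
every `m ≥ 1` and every `0 ≤ k ≤ m` the partial matching map `X_m → Hom(Λ[m,k], X)` is
bijective. Then `X` is isomorphic to the constant simplicial set with value `X₀`; in
particular all face and degeneracy maps of `X` are bijections. -/
theorem zeroHypergroupoid_isConstant (X : SSet.{u})
    (hX : ∀ (m : ℕ) (k : Fin (m + 2)), Function.Bijective (partialMatchingMap X (m + 1) k)) :
    Nonempty (X ≅ (Functor.const SimplexCategoryᵒᵖ).obj (X _⦋0⦌)) ∧
    (∀ (m : ℕ) (i : Fin (m + 2)), Function.Bijective (X.δ i : X _⦋m + 1⦌ → X _⦋m⦌)) ∧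
    (∀ (m : ℕ) (i : Fin (m + 1)), Function.Bijective (X.σ i : X _⦋m⦌ → X _⦋m + 1⦌)) := by
  exact ⟨⟨(constIso X hX).symm⟩, fun m i => ⟨face_inj X hX m i, face_surj X m i⟩,
    fun m i => sigma_bij X hX m i⟩
end
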